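/- arXiv:2311.07009 — 12 statements merged into one kernel-verified Lean document; each statement's English description precedes it below -/
import Mathlib

section
/- For every n ≥ 4 and every δ > 0, there exists a source of size n (positive probabilities summing to 1) and two prefix codes C and H for the source, where H is a Huffman code (expected-length optimal), such that the competitive advantage of C over H exceeds 1/3 − δ. -/
open Finset List

def bval : List Bool → ℕ
  | [] => 0
  | b :: t => (cond b 1 0) * 2 ^ t.length + bval t

lemma bval_lt (w : List Bool) : bval w < 2 ^ w.length := by
  induction w with
  | nil => simp [bval]
  | cons b t ih =>
    simp only [bval, List.length_cons, pow_succ]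
    cases b <;> simp <;> omega

def iv (M : ℕ) (w : List Bool) : Finset ℕ :=
  Finset.Ico (bval w * 2 ^ (M - w.length)) ((bval w + 1) * 2 ^ (M - w.length))

lemma iv_subset {M : ℕ} {w : List Bool} (hw : w.length ≤ M) :
    iv M w ⊆ Finset.range (2 ^ M) := by
  intro x hx
  simp only [iv, Finset.mem_Ico] at hx
  simp only [Finset.mem_range]
  have h1 : (bval w + 1) * 2 ^ (M - w.length) ≤ 2 ^ w.length * 2 ^ (M - w.length) :=
    Nat.mul_le_mul_right _ (bval_lt w)
  have h2 : 2 ^ w.length * 2 ^ (M - w.length) = 2 ^ M := pow_mul_pow_sub 2 hw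
  omega

lemma iv_disjoint : ∀ (u : List Bool) (v : List Bool) (M : ℕ), u.length ≤ M → v.length ≤ M →
    ¬ u <+: v → ¬ v <+: u → Disjoint (iv M u) (iv M v) := by
  intro u
  induction u with
  | nil => intro v M _ _ huv _; exact absurd (List.nil_prefix) huv
  | cons a u' ih =>
    intro v M hu hv huv hvu
    match v with
    | [] => exact absurd (List.nil_prefix) hvu
    | b :: v' =>
      match M with
      | 0 => simp at hu
      | M' + 1 =>
        have hu' : u'.length ≤ M' := by simpa using hu
        have hv' : v'.length ≤ M' := by simpa using hv
        have e1 : M' + 1 - (a :: u').length = M' - u'.length := by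
          simp only [List.length_cons]; omega
        have e2 : M' + 1 - (b :: v').length = M' - v'.length := by
          simp only [List.length_cons]; omega
        have keyu : bval (a :: u') * 2 ^ (M' - u'.length)
            = (cond a 1 0) * 2 ^ M' + bval u' * 2 ^ (M' - u'.length) := by
          show ((cond a 1 0) * 2 ^ u'.length + bval u') * 2 ^ (M' - u'.length) = _
          rw [add_mul, mul_assoc, pow_mul_pow_sub 2 hu']
        have keyv : bval (b :: v') * 2 ^ (M' - v'.length)
            = (cond b 1 0) * 2 ^ M' + bval v' * 2 ^ (M' - v'.length) := by
          show ((cond b 1 0) * 2 ^ v'.length + bval v') * 2 ^ (M' - v'.length) = _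
          rw [add_mul, mul_assoc, pow_mul_pow_sub 2 hv']
        have hub : bval u' * 2 ^ (M' - u'.length) + 2 ^ (M' - u'.length) ≤ 2 ^ M' := by
          have h1 : (bval u' + 1) * 2 ^ (M' - u'.length) ≤ 2 ^ u'.length * 2 ^ (M' - u'.length) :=
            Nat.mul_le_mul_right _ (bval_lt u')
          rw [add_mul, one_mul, pow_mul_pow_sub 2 hu'] at h1; omega
        have hvb : bval v' * 2 ^ (M' - v'.length) + 2 ^ (M' - v'.length) ≤ 2 ^ M' := by
          have h1 : (bval v' + 1) * 2 ^ (M' - v'.length) ≤ 2 ^ v'.length * 2 ^ (M' - v'.length) :=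
            Nat.mul_le_mul_right _ (bval_lt v')
          rw [add_mul, one_mul, pow_mul_pow_sub 2 hv'] at h1; omega
        rw [Finset.disjoint_left]
        intro x hxu hxv
        simp only [iv, Finset.mem_Ico, e1, e2, add_mul, one_mul, keyu, keyv] at hxu hxv
        by_cases hab : a = b
        · subst hab
          have huv' : ¬ u' <+: v' := fun h => huv (List.cons_prefix_cons.2 ⟨rfl, h⟩)
          have hvu' : ¬ v' <+: u' := fun h => hvu (List.cons_prefix_cons.2 ⟨rfl, h⟩)
          have hd := ih v' M' hu' hv' huv' hvu'
          rw [Finset.disjoint_left] at hd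
          refine hd (a := x - (cond a 1 0) * 2 ^ M') ?_ ?_ <;>
            simp only [iv, Finset.mem_Ico, add_mul, one_mul] <;> omega
        · cases a <;> cases b <;> simp at hab hxu hxv ⊢ <;> omega
lemma kraft {n : ℕ} (w : Fin n → List Bool)
    (hpf : ∀ i j, i ≠ j → ¬ w i <+: w j) :
    ∑ i, ((1:ℝ)/2) ^ (w i).length ≤ 1 := by
  rcases Nat.eq_zero_or_pos n with rfl | hn
  · simp
  set M : ℕ := Finset.univ.sup (fun i => (w i).length) with hM
  have hle : ∀ i, (w i).length ≤ M := by
    intro i; rw [hM]; exact Finset.le_sup (f := fun i => (w i).length) (Finset.mem_univ i)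
  have hdistinct : ∀ i j : Fin n, i ≠ j → Disjoint (iv M (w i)) (iv M (w j)) := by
    intro i j hij
    exact iv_disjoint (w i) (w j) M (hle i) (hle j) (hpf i j hij) (hpf j i hij.symm)
  have hcard : ∑ i : Fin n, (iv M (w i)).card = (Finset.univ.biUnion (fun i => iv M (w i))).card :=
    (Finset.card_biUnion (fun i _ j _ hij => hdistinct i j hij)).symm
  have hsub : (Finset.univ.biUnion (fun i => iv M (w i))) ⊆ Finset.range (2 ^ M) := by
    intro x hx
    rcases Finset.mem_biUnion.1 hx with ⟨i, _, hxi⟩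
    exact iv_subset (hle i) hxi
  have hnat : ∑ i : Fin n, 2 ^ (M - (w i).length) ≤ 2 ^ M := by
    have h1 : ∀ i : Fin n, (iv M (w i)).card = 2 ^ (M - (w i).length) := by
      intro i
      simp only [iv, Nat.card_Ico]
      generalize bval (w i) = v
      generalize (2:ℕ) ^ (M - (w i).length) = P
      rw [add_mul, one_mul]; omega
    calc ∑ i : Fin n, 2 ^ (M - (w i).length) = ∑ i : Fin n, (iv M (w i)).card := by
          exact Finset.sum_congr rfl (fun i _ => (h1 i).symm)
      _ = (Finset.univ.biUnion (fun i => iv M (w i))).card := hcard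
      _ ≤ (Finset.range (2 ^ M)).card := Finset.card_le_card hsub
      _ = 2 ^ M := Finset.card_range _
  have hreal : ∑ i : Fin n, (2:ℝ) ^ (M - (w i).length) ≤ 2 ^ M := by
    calc ∑ i : Fin n, (2:ℝ) ^ (M - (w i).length)
        = ((∑ i : Fin n, 2 ^ (M - (w i).length) : ℕ) : ℝ) := by push_cast; ring
      _ ≤ ((2 ^ M : ℕ) : ℝ) := by exact_mod_cast hnat
      _ = 2 ^ M := by push_cast; ring
  have key : ∀ i : Fin n, ((1:ℝ)/2) ^ (w i).length = (2:ℝ) ^ (M - (w i).length) / 2 ^ M := by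
    intro i
    rw [eq_div_iff (by positivity), div_pow, one_pow, div_mul_eq_mul_div]
    rw [div_eq_iff (by positivity), one_mul, ← pow_add, Nat.sub_add_cancel (hle i)]
  calc ∑ i, ((1:ℝ)/2) ^ (w i).length
      = ∑ i : Fin n, (2:ℝ) ^ (M - (w i).length) / 2 ^ M :=
        Finset.sum_congr rfl (fun i _ => key i)
    _ = (∑ i : Fin n, (2:ℝ) ^ (M - (w i).length)) / 2 ^ M := by rw [Finset.sum_div]
    _ ≤ (2:ℝ) ^ M / 2 ^ M := by
        apply div_le_div_of_nonneg_right hreal (by positivity) |>.trans_eq rfl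
    _ = 1 := by field_simp

lemma two_pow_ge (d : ℕ) : (d : ℝ) + 1 ≤ 2 ^ d := by
  have h := Nat.lt_two_pow_self (n := d)
  have : (d : ℝ) + 1 ≤ ((2 ^ d : ℕ) : ℝ) := by exact_mod_cast h
  simpa using this

/-- per-coordinate inequality for the tail symbols -/
lemma tail_ineq (L k : ℕ) :
    ((1:ℝ)/2) ^ L * k + (1/2) ^ k ≥ (1/2) ^ L * L + (1/2) ^ L := by
  rcases le_or_gt k L with hk | hk
  · -- k ≤ L : (1/2)^k = (1/2)^L * 2^(L-k) ≥ (1/2)^L * (L-k+1)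
    have hpow : ((1:ℝ)/2) ^ k * (1/2) ^ (L - k) = (1/2) ^ L := pow_mul_pow_sub _ hk
    have h3 : ((1:ℝ)/2) ^ (L - k) * 2 ^ (L - k) = 1 := by
      rw [← mul_pow]; norm_num
    have h5 : ((1:ℝ)/2) ^ L * 2 ^ (L - k) = (1/2) ^ k := by
      rw [← hpow, mul_assoc, h3, mul_one]
    have hcast : ((L - k : ℕ) : ℝ) = (L : ℝ) - k := Nat.cast_sub hk
    have h2 : ((L : ℝ) - k) + 1 ≤ 2 ^ (L - k) := by
      have := two_pow_ge (L - k)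
      rw [hcast] at this; exact this
    have h4 : (0:ℝ) < (1/2) ^ L := by positivity
    have h6 : ((1:ℝ)/2) ^ L * (((L:ℝ) - k) + 1) ≤ (1/2) ^ L * 2 ^ (L - k) :=
      mul_le_mul_of_nonneg_left h2 h4.le
    rw [h5] at h6
    nlinarith
  · have h2 : ((L:ℝ)) + 1 ≤ (k : ℝ) := by exact_mod_cast hk
    have h3 : (0:ℝ) < (1/2) ^ L := by positivity
    have h4 : (0:ℝ) ≤ (1/2) ^ k := by positivity
    nlinarith

set_option maxHeartbeats 2000000 in
lemma star (l : ℝ) (hl0 : 0 < l) (hl1 : l ≤ 1/100) (a b c : ℕ)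
    (ha : 1 ≤ a) (hb : 1 ≤ b) (hc : 1 ≤ c)
    (hK : ((1:ℝ)/2)^a + (1/2)^b + (1/2)^c < 1) :
    (1/3 + l) * a + (1/3) * b + (1/3 - 9/8*l) * c + l * ((1/2)^a + (1/2)^b + (1/2)^c)
      ≥ (1/3 + l) * 1 + (1/3) * 2 + (1/3 - 9/8*l) * 3 + 7/8 * l := by
  have pa : (0:ℝ) ≤ (1/2)^a := by positivity
  have pb : (0:ℝ) ≤ (1/2)^b := by positivity
  have pc : (0:ℝ) ≤ (1/2)^c := by positivity
  have ca : (1:ℝ) ≤ a := by exact_mod_cast ha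
  have cb : (1:ℝ) ≤ b := by exact_mod_cast hb
  have cc : (1:ℝ) ≤ c := by exact_mod_cast hc
  have hA : (0:ℝ) < 1/3 + l := by linarith
  have hB : (0:ℝ) < 1/3 := by norm_num
  have hC : (0:ℝ) < 1/3 - 9/8*l := by linarith
  have hS : 0 ≤ l * ((1/2:ℝ)^a + (1/2)^b + (1/2)^c) := by positivity
  have mA : (1/3 + l) * (1:ℝ) ≤ (1/3 + l) * a := mul_le_mul_of_nonneg_left ca hA.le
  have mB : (1/3:ℝ) * 1 ≤ (1/3) * b := mul_le_mul_of_nonneg_left cb hB.le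
  have mC : (1/3 - 9/8*l) * (1:ℝ) ≤ (1/3 - 9/8*l) * c := mul_le_mul_of_nonneg_left cc hC.le
  rcases le_or_gt a 3 with ha3 | ha4
  swap
  · -- a ≥ 4
    have h4 : (4:ℝ) ≤ a := by exact_mod_cast ha4
    have mA4 : (1/3 + l) * (4:ℝ) ≤ (1/3 + l) * a := mul_le_mul_of_nonneg_left h4 hA.le
    linarith
  rcases le_or_gt b 3 with hb3 | hb4
  swap
  · have h4 : (4:ℝ) ≤ b := by exact_mod_cast hb4
    have mB4 : (1/3:ℝ) * 4 ≤ (1/3) * b := mul_le_mul_of_nonneg_left h4 hB.le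
    linarith
  rcases le_or_gt c 3 with hc3 | hc4
  swap
  · -- c ≥ 4
    have h4 : (4:ℝ) ≤ c := by exact_mod_cast hc4
    have mC4 : (1/3 - 9/8*l) * (4:ℝ) ≤ (1/3 - 9/8*l) * c := mul_le_mul_of_nonneg_left h4 hC.le
    by_cases hab : a = 1 ∧ b = 1
    · exfalso
      obtain ⟨rfl, rfl⟩ := hab
      norm_num at hK
      linarith
    · have hab3 : 3 ≤ a + b := by omega
      have hab3' : (3:ℝ) ≤ (a:ℝ) + b := by exact_mod_cast hab3
      have mla : l * 1 ≤ l * a := mul_le_mul_of_nonneg_left ca hl0.le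
      -- (1/3+l)*a + (1/3)*b ≥ (1/3)*(a+b) + l*a ≥ 1 + l
      have expand : (1/3 + l) * (a:ℝ) + (1/3) * b = (1/3) * ((a:ℝ) + b) + l * a := by ring
      have h13 : (1/3:ℝ) * 3 ≤ (1/3) * ((a:ℝ) + b) := mul_le_mul_of_nonneg_left hab3' hB.le
      linarith
  interval_cases a <;> interval_cases b <;> interval_cases c <;>
    norm_num at hK <;> norm_num <;> linarith

def hwn (n i : ℕ) : List Bool :=
  if i = n - 1 then List.replicate (n-1) true else List.replicate i true ++ [false]

def cwn (n i : ℕ) : List Bool :=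
  if i = 0 then [true, true, false]
  else if i = 1 then [false]
  else if i = 2 then [true, false]
  else hwn n i

lemma hwn_length (n i : ℕ) : (hwn n i).length = if i = n - 1 then n - 1 else i + 1 := by
  unfold hwn; split <;> simp

lemma not_prefix_of_get {x y : List Bool} {k : ℕ} (hkx : k < x.length) (hky : k < y.length)
    (hne : x[k] ≠ y[k]) : ¬ x <+: y := fun h => hne (h.getElem hkx)

lemma gA (a k : ℕ) (h : k < a) :
    (List.replicate a true ++ [false])[k]'(by simp; omega) = true := by
  rw [List.getElem_append_left (by simpa using h)]
  simp

lemma gB (a : ℕ) : (List.replicate a true ++ [false])[a]'(by simp) = false := by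
  rw [List.getElem_append_right (by simp)]
  simp

lemma gC (m k : ℕ) (h : k < m) : (List.replicate m true)[k]'(by simpa using h) = true := by
  simp

-- h-codeword entries for indices ≥ 3 : first three bits are true
lemma hwn_get_true (n j k : ℕ) (hn : 4 ≤ n) (hj3 : 3 ≤ j) (hjn : j < n) (hk : k < 3) :
    (hwn n j)[k]'(by rw [hwn_length]; split <;> omega) = true := by
  unfold hwn
  split
  · exact gC _ _ (by omega)
  · have hjn1 : j ≠ n - 1 := by assumption
    exact gA _ _ (by omega)

lemma hwn_length_ge (n j : ℕ) (hn : 4 ≤ n) (hj3 : 3 ≤ j) (hjn : j < n) :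
    3 ≤ (hwn n j).length := by
  rw [hwn_length]; split <;> omega

lemma hwn_pf (n : ℕ) (hn : 4 ≤ n) (i j : ℕ) (hi : i < n) (hj : j < n) (hij : i ≠ j) :
    ¬ hwn n i <+: hwn n j := by
  unfold hwn
  split <;> split
  · -- i = n-1, j = n-1
    omega
  · -- i = n-1, j ≠ n-1 : replicate (n-1) true <+: replicate j true ++ [false]
    intro hp
    have hlen := hp.length_le
    simp at hlen
    have hj2 : j = n - 2 := by omega
    have hgei := hp.getElem (i := n - 2) (by simp; omega)
    rw [gC _ _ (by omega)] at hgei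
    have : (List.replicate j true ++ [false])[n-2]'(by simp; omega) = false := by
      subst hj2; exact gB _
    rw [this] at hgei
    simp at hgei
  · -- i ≠ n-1, j = n-1
    have hin : i < n - 1 := by omega
    exact not_prefix_of_get (x := List.replicate i true ++ [false]) (k := i)
      (by simp) (by simp; omega) (by rw [gB, gC _ _ hin]; simp)
  · -- both interior
    intro hp
    have hlen := hp.length_le
    simp at hlen
    have hij' : i < j := by omega
    have hge := hp.getElem (i := i) (by simp)
    rw [gB, gA _ _ hij'] at hge
    simp at hge

lemma cwn_eq_h (n i : ℕ) (h3 : 3 ≤ i) : cwn n i = hwn n i := by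
  unfold cwn
  rw [if_neg (by omega), if_neg (by omega), if_neg (by omega)]

lemma cwn_pf (n : ℕ) (hn : 4 ≤ n) (i j : ℕ) (hi : i < n) (hj : j < n) (hij : i ≠ j) :
    ¬ cwn n i <+: cwn n j := by
  rcases Nat.lt_or_ge i 3 with hi3 | hi3 <;> rcases Nat.lt_or_ge j 3 with hj3 | hj3
  · -- both small : literal lists
    unfold cwn
    interval_cases i <;> interval_cases j <;> simp_all <;> decide
  · -- i small, j ≥ 3
    rw [cwn_eq_h n j hj3]
    have hylen := hwn_length_ge n j hn hj3 hj
    interval_cases i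
    · exact not_prefix_of_get (x := [true,true,false]) (k := 2) (by norm_num) (by omega)
        (by rw [hwn_get_true n j 2 hn hj3 hj (by norm_num)]; decide)
    · exact not_prefix_of_get (x := [false]) (k := 0) (by norm_num) (by omega)
        (by rw [hwn_get_true n j 0 hn hj3 hj (by norm_num)]; decide)
    · exact not_prefix_of_get (x := [true,false]) (k := 1) (by norm_num) (by omega)
        (by rw [hwn_get_true n j 1 hn hj3 hj (by norm_num)]; decide)
  · -- i ≥ 3, j small
    rw [cwn_eq_h n i hi3]
    have hxlen := hwn_length_ge n i hn hi3 hi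
    interval_cases j
    · exact not_prefix_of_get (y := [true,true,false]) (k := 2) (by omega) (by norm_num)
        (by rw [hwn_get_true n i 2 hn hi3 hi (by norm_num)]; decide)
    · exact not_prefix_of_get (y := [false]) (k := 0) (by omega) (by norm_num)
        (by rw [hwn_get_true n i 0 hn hi3 hi (by norm_num)]; decide)
    · exact not_prefix_of_get (y := [true,false]) (k := 1) (by omega) (by norm_num)
        (by rw [hwn_get_true n i 1 hn hi3 hi (by norm_num)]; decide)
  · rw [cwn_eq_h n i hi3, cwn_eq_h n j hj3]
    exact hwn_pf n hn i j hi hj hij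

lemma cwn_length (n i : ℕ) (hn : 4 ≤ n) (hi : i < n) :
    (cwn n i).length = if i = 0 then 3 else if i = 1 then 1 else if i = 2 then 2
      else (hwn n i).length := by
  unfold cwn
  split <;> [skip; split] <;> [simp; skip; skip]
  · simp
  · split <;> simp

noncomputable def pn (n : ℕ) (l : ℝ) (i : ℕ) : ℝ :=
  if i = 0 then 1/3 + l else if i = 1 then 1/3 else if i = 2 then 1/3 - 9/8*l
  else l * ((1:ℝ)/2) ^ ((hwn n i).length)

lemma split3 (n : ℕ) (hn : 4 ≤ n) (f : ℕ → ℝ) :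
    ∑ k ∈ Finset.range n, f k = f 0 + f 1 + f 2 + ∑ k ∈ Finset.Ico 3 n, f k := by
  rw [Finset.range_eq_Ico, ← Finset.sum_Ico_consecutive f (Nat.zero_le 3) (by omega)]
  congr 1
  rw [← Finset.range_eq_Ico]
  simp [Finset.sum_range_succ]

lemma tiny_kraft (n : ℕ) (hn : 4 ≤ n) :
    ∑ i ∈ Finset.Ico 3 n, ((1:ℝ)/2) ^ ((hwn n i).length) = 1/8 := by
  obtain ⟨m, rfl⟩ : ∃ m, n = m + 4 := ⟨n - 4, by omega⟩
  have htop : ∑ i ∈ Finset.Ico 3 (m+4), ((1:ℝ)/2) ^ ((hwn (m+4) i).length)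
      = (∑ i ∈ Finset.Ico 3 (m+3), ((1:ℝ)/2) ^ ((hwn (m+4) i).length))
        + ((1:ℝ)/2) ^ ((hwn (m+4) (m+3)).length) :=
    Finset.sum_Ico_succ_top (by omega) _
  have hlast : (hwn (m+4) (m+3)).length = m + 3 := by
    rw [hwn_length, if_pos (by omega : m + 3 = m + 4 - 1)]
    omega
  have hmid : ∀ i ∈ Finset.Ico 3 (m+3), ((1:ℝ)/2) ^ ((hwn (m+4) i).length)
      = ((1:ℝ)/2) ^ i * (1/2) := by
    intro i hi
    rw [Finset.mem_Ico] at hi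
    rw [hwn_length, if_neg (by omega), pow_succ]
  rw [htop, hlast, Finset.sum_congr rfl hmid, ← Finset.sum_mul,
    geom_sum_Ico (by norm_num : ((1:ℝ)/2) ≠ 1) (by omega)]
  have hp : ((1:ℝ)/2) ^ (m+3) = (1/2)^(m+3) := rfl
  field_simp
  ring

set_option maxHeartbeats 1000000 in
/-- For every n ≥ 4 and δ > 0 there is a source of size n, a Huffman
(expected-length optimal) prefix code h, and a prefix code c whose
competitive advantage over h exceeds 1/3 − δ. -/
theorem exists_advantage_close_to_one_third (n : ℕ) (hn : 4 ≤ n)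
    (δ : ℝ) (hδ : 0 < δ) :
    ∃ (p : Fin n → ℝ) (c h : Fin n → List Bool),
      (∀ i, 0 < p i) ∧ (∑ i, p i = 1) ∧
      (∀ i j, i ≠ j → ¬ (c i <+: c j)) ∧
      (∀ i j, i ≠ j → ¬ (h i <+: h j)) ∧
      (∀ c' : Fin n → List Bool, (∀ i j, i ≠ j → ¬ (c' i <+: c' j)) →
        ∑ i, p i * (h i).length ≤ ∑ i, p i * (c' i).length) ∧
      (∑ i ∈ Finset.univ.filter (fun i => (c i).length < (h i).length), p i)
        - (∑ i ∈ Finset.univ.filter (fun i => (h i).length < (c i).length), p i)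
        > 1/3 - δ := by
  have hmin : 0 < min δ 1 := lt_min hδ one_pos
  set l : ℝ := min δ 1 / 300 with hldef
  have hl0 : 0 < l := by positivity
  have hl1 : l ≤ 1/100 := by
    have h1 : min δ 1 ≤ 1 := min_le_right _ _
    rw [hldef]; linarith
  have hlδ : 17/8 * l < δ := by
    have h1 : min δ 1 ≤ δ := min_le_left _ _
    rw [hldef]; linarith
  -- length facts
  have hL0 : (hwn n 0).length = 1 := by rw [hwn_length, if_neg (by omega)]
  have hL1 : (hwn n 1).length = 2 := by rw [hwn_length, if_neg (by omega)]
  have hL2 : (hwn n 2).length = 3 := by rw [hwn_length, if_neg (by omega)]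
  have hC0 : (cwn n 0).length = 3 := by simp [cwn]
  have hC1 : (cwn n 1).length = 1 := by simp [cwn]
  have hC2 : (cwn n 2).length = 2 := by simp [cwn]
  have hp0 : pn n l 0 = 1/3 + l := by simp [pn]
  have hp1 : pn n l 1 = 1/3 := by simp [pn]
  have hp2 : pn n l 2 = 1/3 - 9/8*l := by simp [pn]
  have hpt : ∀ k, 3 ≤ k → pn n l k = l * ((1:ℝ)/2) ^ ((hwn n k).length) := by
    intro k hk
    simp only [pn, if_neg (by omega : ¬ k = 0), if_neg (by omega : ¬ k = 1),
      if_neg (by omega : ¬ k = 2)]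
  refine ⟨fun i => pn n l i.val, fun i => cwn n i.val, fun i => hwn n i.val, ?_, ?_, ?_, ?_, ?_, ?_⟩
  · -- positivity
    dsimp only
    intro i
    by_cases h0 : i.val = 0
    · rw [h0, hp0]; linarith
    by_cases h1 : i.val = 1
    · rw [h1, hp1]; norm_num
    by_cases h2 : i.val = 2
    · rw [h2, hp2]; linarith
    · rw [hpt i.val (by omega)]
      positivity
  · -- sum to one
    dsimp only
    rw [Fin.sum_univ_eq_sum_range (fun k => pn n l k) n, split3 n hn, hp0, hp1, hp2]
    have : ∑ k ∈ Finset.Ico 3 n, pn n l k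
        = ∑ k ∈ Finset.Ico 3 n, l * ((1:ℝ)/2) ^ ((hwn n k).length) := by
      refine Finset.sum_congr rfl fun k hk => ?_
      rw [Finset.mem_Ico] at hk
      exact hpt k hk.1
    rw [this, ← Finset.mul_sum, tiny_kraft n hn]
    ring
  · -- c prefix-free
    dsimp only
    intro i j hij
    exact cwn_pf n hn i.val j.val i.isLt j.isLt (fun h => hij (Fin.ext h))
  · -- h prefix-free
    dsimp only
    intro i j hij
    exact hwn_pf n hn i.val j.val i.isLt j.isLt (fun h => hij (Fin.ext h))
  · -- optimality
    dsimp only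
    intro c' hpf'
    set mn : ℕ → ℕ := fun k => if hk : k < n then (c' ⟨k, hk⟩).length else 1 with hmn
    have hmval : ∀ i : Fin n, (c' i).length = mn i.val := by
      intro i
      simp only [hmn, i.isLt, dif_pos, Fin.eta]
    have hm1 : ∀ k, k < n → 1 ≤ mn k := by
      intro k hk
      simp only [hmn, dif_pos hk]
      by_contra hlen
      have hnil : c' ⟨k, hk⟩ = [] := by
        cases hcc : c' ⟨k, hk⟩ with
        | nil => rfl
        | cons x xs => rw [hcc] at hlen; simp at hlen
      have hj : (if k = 0 then (⟨1, by omega⟩ : Fin n) else ⟨0, by omega⟩) ≠ ⟨k, hk⟩ := by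
        split <;> [skip; skip] <;> intro hcon <;>
          simp only [Fin.mk.injEq] at hcon <;> omega
      exact hpf' ⟨k, hk⟩ _ (Ne.symm hj) (hnil ▸ List.nil_prefix)
    -- Kraft inequality for c'
    have hkraft := kraft c' hpf'
    have hkraftr : ∑ k ∈ Finset.range n, ((1:ℝ)/2) ^ (mn k) ≤ 1 := by
      rw [← Fin.sum_univ_eq_sum_range (fun k => ((1:ℝ)/2) ^ (mn k)) n]
      calc ∑ i : Fin n, ((1:ℝ)/2) ^ (mn i.val)
          = ∑ i : Fin n, ((1:ℝ)/2) ^ (c' i).length :=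
            Finset.sum_congr rfl fun i _ => by rw [hmval i]
        _ ≤ 1 := hkraft
    rw [split3 n hn] at hkraftr
    set Kt : ℝ := ∑ k ∈ Finset.Ico 3 n, ((1:ℝ)/2) ^ (mn k) with hKt
    have hKtpos : 0 < Kt := by
      rw [hKt]
      apply Finset.sum_pos (fun k _ => by positivity)
      exact ⟨3, Finset.mem_Ico.2 ⟨le_refl 3, by omega⟩⟩
    have hKlt : ((1:ℝ)/2) ^ (mn 0) + (1/2) ^ (mn 1) + (1/2) ^ (mn 2) < 1 := by linarith
    have hstar := star l hl0 hl1 (mn 0) (mn 1) (mn 2)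
      (hm1 0 (by omega)) (hm1 1 (by omega)) (hm1 2 (by omega)) hKlt
    -- tail bound
    have htail : ∑ k ∈ Finset.Ico 3 n, pn n l k * (mn k : ℝ)
        ≥ (∑ k ∈ Finset.Ico 3 n, pn n l k * ((hwn n k).length : ℝ))
          + l * (1/8 - Kt) := by
      have hpt2 : ∀ k ∈ Finset.Ico 3 n,
          pn n l k * ((hwn n k).length : ℝ)
            + l * (((1:ℝ)/2) ^ ((hwn n k).length) - (1/2) ^ (mn k))
          ≤ pn n l k * (mn k : ℝ) := by
        intro k hk
        rw [Finset.mem_Ico] at hk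
        rw [hpt k hk.1]
        have := tail_ineq ((hwn n k).length) (mn k)
        nlinarith [this, hl0.le]
      have hsum := Finset.sum_le_sum hpt2
      rw [Finset.sum_add_distrib, ← Finset.mul_sum, Finset.sum_sub_distrib,
        tiny_kraft n hn, ← hKt] at hsum
      linarith
    -- put everything together
    have hgoal1 : ∑ i : Fin n, pn n l i.val * ((hwn n i.val).length : ℝ)
        = ∑ k ∈ Finset.range n, pn n l k * ((hwn n k).length : ℝ) :=
      Fin.sum_univ_eq_sum_range (fun k => pn n l k * ((hwn n k).length : ℝ)) n
    have hgoal2 : ∑ i : Fin n, pn n l i.val * ((c' i).length : ℝ)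
        = ∑ k ∈ Finset.range n, pn n l k * ((mn k : ℕ) : ℝ) := by
      rw [← Fin.sum_univ_eq_sum_range (fun k => pn n l k * ((mn k : ℕ) : ℝ)) n]
      exact Finset.sum_congr rfl fun i _ => by rw [hmval i]
    rw [hgoal1, hgoal2, split3 n hn, split3 n hn]
    rw [hp0, hp1, hp2, hL0, hL1, hL2]
    have hmul : l * (((1:ℝ)/2) ^ (mn 0) + (1/2) ^ (mn 1) + (1/2) ^ (mn 2) + Kt) ≤ l * 1 :=
      mul_le_mul_of_nonneg_left (by linarith) hl0.le
    push_cast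
    push_cast at hstar
    linarith
  · -- the advantage
    dsimp only
    rw [Finset.sum_filter, Finset.sum_filter]
    rw [Fin.sum_univ_eq_sum_range
      (fun k => if (cwn n k).length < (hwn n k).length then pn n l k else 0) n]
    rw [Fin.sum_univ_eq_sum_range
      (fun k => if (hwn n k).length < (cwn n k).length then pn n l k else 0) n]
    rw [split3 n hn, split3 n hn]
    have ht1 : ∀ k ∈ Finset.Ico 3 n,
        (if (cwn n k).length < (hwn n k).length then pn n l k else 0) = 0 := by
      intro k hk
      rw [Finset.mem_Ico] at hk
      rw [cwn_eq_h n k hk.1, if_neg (lt_irrefl _)]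
    have ht2 : ∀ k ∈ Finset.Ico 3 n,
        (if (hwn n k).length < (cwn n k).length then pn n l k else 0) = 0 := by
      intro k hk
      rw [Finset.mem_Ico] at hk
      rw [cwn_eq_h n k hk.1, if_neg (lt_irrefl _)]
    rw [Finset.sum_congr rfl ht1, Finset.sum_congr rfl ht2]
    rw [hC0, hC1, hC2, hL0, hL1, hL2]
    norm_num
    rw [hp0, hp1, hp2]
    linarith
end

section
/- For every positive integer n and every ε with 0 < ε < 4^{−n}, consider the source of size n with probabilities p_k = 2^{−k} − ε for 1 ≤ k ≤ n−1 and p_n = 2^{−n+1} + (n−1)ε. The Shannon–Fano codeword lengths are l_k = ⌈log₂(1/p_k)⌉ = k+1 for 1 ≤ k ≤ n−1 and l_n = n−1. Moreover there is a prefix code (assigning 1^{k−1}0 to symbol k for k < n and 1^{n−1} to symbol n) whose competitive advantage over the Shannon–Fano code equals 1 − p_n ≥ 1 − 2^{−n+2}. -/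
lemma sf_ceil_logb_inv_eq (m : ℤ) (x : ℝ) (h1 : (2:ℝ)^(-m) ≤ x) (h2 : x < (2:ℝ)^(1-m)) :
    ⌈Real.logb 2 (1/x)⌉ = m := by
  have hx : 0 < x := lt_of_lt_of_le (zpow_pos (by norm_num) _) h1
  have hix : 0 < 1/x := by positivity
  rw [Int.ceil_eq_iff]
  constructor
  · rw [show (m:ℝ) - 1 = ((m - 1 : ℤ) : ℝ) by push_cast; ring,
      Real.lt_logb_iff_rpow_lt one_lt_two hix, Real.rpow_intCast, lt_div_iff₀ hx]
    calc (2:ℝ)^(m-1) * x < (2:ℝ)^(m-1) * (2:ℝ)^(1-m) := by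
          exact mul_lt_mul_of_pos_left h2 (zpow_pos (by norm_num) _)
      _ = 1 := by rw [← zpow_add₀ (by norm_num : (2:ℝ) ≠ 0)]; norm_num
  · rw [Real.logb_le_iff_le_rpow one_lt_two hix, Real.rpow_intCast, div_le_iff₀ hx]
    calc (1:ℝ) = (2:ℝ)^m * (2:ℝ)^(-m) := by
          rw [← zpow_add₀ (by norm_num : (2:ℝ) ≠ 0)]; norm_num
      _ ≤ (2:ℝ)^m * x := mul_le_mul_of_nonneg_left h1 (le_of_lt (zpow_pos (by norm_num) _))

lemma sf_geom (m : ℕ) : ∑ k ∈ Finset.Icc 1 m, (2:ℝ)^(-(k:ℤ)) = 1 - (2:ℝ)^(-(m:ℤ)) := by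
  induction m with
  | zero => simp
  | succ m ih =>
    rw [Finset.sum_Icc_succ_top (by omega), ih]
    have h1 : (2:ℝ)^(-(m:ℤ)) = 2 * (2:ℝ)^(-((m:ℤ)+1)) := by
      rw [show -(m:ℤ) = (-((m:ℤ)+1)) + 1 by ring, zpow_add₀ (by norm_num : (2:ℝ) ≠ 0)]
      ring
    push_cast
    rw [show -((m:ℤ)+1) = -(m:ℤ)-1 by ring] at *
    linarith [h1]

/-- The Shannon–Fano construction: for the source p_k = 2^{−k} − ε
(1 ≤ k ≤ n−1), p_n = 2^{−n+1} + (n−1)ε with 0 < ε < 4^{−n}, the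
Shannon–Fano lengths are ⌈log₂(1/p_k)⌉ = k+1 for k ≤ n−1 and n−1 for k = n,
and the prefix code assigning 1^{k−1}0 to k < n and 1^{n−1} to n has
competitive advantage 1 − p_n ≥ 1 − 2^{−n+2} over the Shannon–Fano code. -/
theorem sf_construction (n : ℕ) (hn : 1 ≤ n) (ε : ℝ) (hε : 0 < ε)
    (hε' : ε < (4:ℝ) ^ (-(n:ℤ)))
    (p : ℕ → ℝ)
    (hpk : ∀ k, 1 ≤ k → k ≤ n - 1 → p k = (2:ℝ) ^ (-(k:ℤ)) - ε)
    (hpn : p n = (2:ℝ) ^ (1 - (n:ℤ)) + ((n:ℝ) - 1) * ε)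
    (c : ℕ → List Bool)
    (hck : ∀ k, 1 ≤ k → k ≤ n - 1 → c k = List.replicate (k-1) true ++ [false])
    (hcn : c n = List.replicate (n-1) true) :
    (∀ k : ℕ, 1 ≤ k → k ≤ n - 1 → ⌈Real.logb 2 (1 / p k)⌉ = (k:ℤ) + 1) ∧
    (⌈Real.logb 2 (1 / p n)⌉ = (n:ℤ) - 1) ∧
    ((∑ k ∈ Finset.Icc 1 n,
        if ((c k).length : ℤ) < ⌈Real.logb 2 (1 / p k)⌉ then p k else 0)
      - (∑ k ∈ Finset.Icc 1 n,
        if ⌈Real.logb 2 (1 / p k)⌉ < ((c k).length : ℤ) then p k else 0)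
      = 1 - p n) ∧
    1 - p n ≥ 1 - (2:ℝ) ^ (2 - (n:ℤ)) := by
  obtain ⟨m, rfl⟩ : ∃ m, n = m + 1 := ⟨n - 1, by omega⟩
  have hm : m + 1 - 1 = m := by omega
  rw [hm] at hpk hck
  have h2ne : (2:ℝ) ≠ 0 := by norm_num
  -- key bound : (n-1) * ε < 2^(1-n), i.e. m * ε < 2^(-m)
  have hcast : ((m:ℝ) + 1) - 1 = (m:ℝ) := by ring
  have hnc : ((m+1:ℕ):ℤ) = (m:ℤ) + 1 := by push_cast; ring
  have hpn' : p (m+1) = (2:ℝ)^(-(m:ℤ)) + (m:ℝ) * ε := by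
    rw [hpn]; push_cast; ring_nf
  have hkey : (m:ℝ) * ε < (2:ℝ)^(-(m:ℤ)) := by
    rcases Nat.eq_zero_or_pos m with h0 | h0
    · subst h0; simpa using zpow_pos (by norm_num : (0:ℝ) < 2) 0
    · have h4 : (4:ℝ)^(-(((m:ℕ)+1):ℤ)) = (2:ℝ)^(-2*((m:ℤ)+1)) := by
        rw [show (4:ℝ) = (2:ℝ)^(2:ℤ) by norm_num, ← zpow_mul]
        ring_nf
      have hmlt : (m:ℝ) < (2:ℝ)^((m:ℤ)+1) := by
        have := Nat.lt_two_pow_self (n := m)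
        have : (m:ℝ) < (2:ℝ)^(m:ℕ) := by exact_mod_cast this
        calc (m:ℝ) < (2:ℝ)^(m:ℕ) := this
          _ = (2:ℝ)^(m:ℤ) := by rw [zpow_natCast]
          _ < (2:ℝ)^((m:ℤ)+1) := zpow_lt_zpow_right₀ one_lt_two (by omega)
      have hm0 : (0:ℝ) < m := by exact_mod_cast h0
      calc (m:ℝ) * ε < (m:ℝ) * (4:ℝ)^(-(((m:ℕ)+1):ℤ)) := by
            apply mul_lt_mul_of_pos_left _ hm0
            rw [show -(((m:ℕ)+1):ℤ) = -((m:ℕ)+1:ℕ) by push_cast; ring] at *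
            exact_mod_cast hε'
        _ = (m:ℝ) * (2:ℝ)^(-2*((m:ℤ)+1)) := by rw [h4]
        _ < (2:ℝ)^((m:ℤ)+1) * (2:ℝ)^(-2*((m:ℤ)+1)) := by
            exact mul_lt_mul_of_pos_right hmlt (zpow_pos (by norm_num) _)
        _ = (2:ℝ)^(-((m:ℤ)+1)) := by rw [← zpow_add₀ h2ne]; ring_nf
        _ ≤ (2:ℝ)^(-(m:ℤ)) := le_of_lt (zpow_lt_zpow_right₀ one_lt_two (by omega))
  -- small epsilon bound for k ≤ m
  have hεsmall : ∀ k : ℕ, 1 ≤ k → k ≤ m → ε < (2:ℝ)^(-((k:ℤ)+1)) := fun k h1 h2 => by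
    calc ε < (4:ℝ)^(-((m:ℕ)+1:ℕ):ℤ) := by exact_mod_cast hε'
      _ = (2:ℝ)^(-2*((m:ℤ)+1)) := by
          rw [show (4:ℝ) = (2:ℝ)^(2:ℤ) by norm_num, ← zpow_mul]; push_cast; ring_nf
      _ ≤ (2:ℝ)^(-((k:ℤ)+1)) := by
          apply zpow_le_zpow_right₀ (by norm_num : (1:ℝ) ≤ 2)
          omega
  -- ceiling for k ≤ m
  have hceil : ∀ k : ℕ, 1 ≤ k → k ≤ m → ⌈Real.logb 2 (1 / p k)⌉ = (k:ℤ) + 1 := by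
    intro k h1 h2
    rw [hpk k h1 h2]
    apply sf_ceil_logb_inv_eq
    · have := hεsmall k h1 h2
      have h3 : (2:ℝ)^(-((k:ℤ)+1)) + (2:ℝ)^(-((k:ℤ)+1)) = (2:ℝ)^(-(k:ℤ)) := by
        rw [show -(k:ℤ) = (-((k:ℤ)+1)) + 1 by ring, zpow_add₀ h2ne]; ring
      linarith
    · have : (2:ℝ)^(1-((k:ℤ)+1)) = (2:ℝ)^(-(k:ℤ)) := by ring_nf
      rw [this]; linarith
  -- ceiling for n
  have hceiln : ⌈Real.logb 2 (1 / p (m+1))⌉ = ((m+1:ℕ):ℤ) - 1 := by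
    rw [hpn', hnc, show (m:ℤ)+1-1 = (m:ℤ) by ring]
    apply sf_ceil_logb_inv_eq
    · have : (0:ℝ) ≤ (m:ℝ) * ε := by positivity
      linarith
    · have h3 : (2:ℝ)^(1-(m:ℤ)) = (2:ℝ)^(-(m:ℤ)) + (2:ℝ)^(-(m:ℤ)) := by
        rw [show (1:ℤ)-(m:ℤ) = (-(m:ℤ)) + 1 by ring, zpow_add₀ h2ne]; ring
      linarith
  refine ⟨hceil, hceiln, ?_, ?_⟩
  · -- the sums
    have hlen : ∀ k : ℕ, 1 ≤ k → k ≤ m → ((c k).length : ℤ) = (k:ℤ) := by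
      intro k h1 h2
      rw [hck k h1 h2]; simp; omega
    have hlenn : ((c (m+1)).length : ℤ) = (m:ℤ) := by
      rw [hcn]; simp
    rw [Finset.sum_Icc_succ_top (by omega), Finset.sum_Icc_succ_top (by omega)]
    rw [if_neg (by rw [hlenn, hceiln, hnc]; omega),
        if_neg (by rw [hlenn, hceiln, hnc]; omega)]
    have hS2 : ∑ k ∈ Finset.Icc 1 m,
        (if ⌈Real.logb 2 (1 / p k)⌉ < ((c k).length : ℤ) then p k else 0) = 0 := by
      apply Finset.sum_eq_zero
      intro k hk
      simp only [Finset.mem_Icc] at hk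
      rw [if_neg (by rw [hlen k hk.1 hk.2, hceil k hk.1 hk.2]; omega)]
    have hS1 : ∑ k ∈ Finset.Icc 1 m,
        (if ((c k).length : ℤ) < ⌈Real.logb 2 (1 / p k)⌉ then p k else 0)
        = ∑ k ∈ Finset.Icc 1 m, ((2:ℝ)^(-(k:ℤ)) - ε) := by
      apply Finset.sum_congr rfl
      intro k hk
      simp only [Finset.mem_Icc] at hk
      rw [if_pos (by rw [hlen k hk.1 hk.2, hceil k hk.1 hk.2]; omega), hpk k hk.1 hk.2]
    rw [hS1, hS2, Finset.sum_sub_distrib, sf_geom, Finset.sum_const, Nat.card_Icc, hpn']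
    simp only [nsmul_eq_mul, Nat.add_sub_cancel]
    push_cast
    ring
  · -- final inequality
    rw [hpn']
    rw [show (2:ℤ) - ((m+1:ℕ):ℤ) = 2 - ((m:ℤ)+1) by push_cast; ring]
    have h3 : (2:ℝ)^(2-((m:ℤ)+1)) = (2:ℝ)^(-(m:ℤ)) + (2:ℝ)^(-(m:ℤ)) := by
      rw [show (2:ℤ)-((m:ℤ)+1) = (-(m:ℤ)) + 1 by ring, zpow_add₀ h2ne]; ring
    linarith
end

section
/- For every positive integer n, there exists a source of size n and a prefix code whose competitive advantage over a Shannon–Fano code for the source is at least 1 − 2^{−n+2}, and whose expected codeword length is at least 1 − 2^{−n+2} less than that of the Shannon–Fano code. -/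
open Real Finset

private lemma ceil_logb_eq (x : ℝ) (k : ℤ) (hx : 0 < x)
    (h1 : (2:ℝ) ^ (-k) ≤ x) (h2 : x < (2:ℝ) ^ (1 - k)) :
    ⌈Real.logb 2 (1 / x)⌉ = k := by
  have hx' : (0:ℝ) < 1 / x := by positivity
  rw [Int.ceil_eq_iff]
  constructor
  · rw [show ((k:ℝ) - 1) = (((k-1 : ℤ) : ℝ)) by push_cast; ring,
      Real.lt_logb_iff_rpow_lt (by norm_num) hx', Real.rpow_intCast]
    rw [lt_div_iff₀ hx]
    calc (2:ℝ) ^ (k - 1) * x < 2 ^ (k-1) * 2 ^ (1 - k) := by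
            apply mul_lt_mul_of_pos_left h2 (by positivity)
        _ = 1 := by rw [← zpow_add₀ (by norm_num : (2:ℝ) ≠ 0)]; norm_num
  · rw [show ((k:ℝ)) = (((k : ℤ) : ℝ)) from rfl,
      Real.logb_le_iff_le_rpow (by norm_num) hx', Real.rpow_intCast]
    rw [div_le_iff₀ hx]
    calc (1:ℝ) = 2 ^ (k) * 2 ^ (-k) := by
            rw [← zpow_add₀ (by norm_num : (2:ℝ) ≠ 0)]; norm_num
      _ ≤ 2 ^ k * x := by apply mul_le_mul_of_nonneg_left h1 (by positivity)

private lemma geom_aux (m : ℕ) :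
    ∑ i ∈ Finset.range m, (1:ℝ)/2^(i+1) = 1 - 1/2^m := by
  induction m with
  | zero => simp
  | succ k ih => rw [Finset.sum_range_succ, ih]; field_simp; ring

private lemma prefix_aux1 (a b : ℕ)
    (h : List.replicate a true ++ [false] <+: List.replicate b true ++ [false]) :
    a = b := by
  by_contra hne
  rcases Nat.lt_or_ge a b with hab | hab
  · have h1 : (List.replicate a true ++ [false])[a]'(by simp) = false :=
      List.getElem_concat_length (by simp) _
    have h2 : (List.replicate b true ++ [false])[a]'(by simp; omega) = true := by
      rw [List.getElem_append_left (by simpa using hab), List.getElem_replicate]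
    rw [h.getElem (by simp)] at h1
    rw [h1] at h2; exact Bool.noConfusion h2
  · have := h.length_le; simp at this; omega

private lemma prefix_aux2 (a b : ℕ) (hab : a < b) :
    ¬ (List.replicate a true ++ [false] <+: List.replicate b true) := by
  intro h
  have h1 : (List.replicate a true ++ [false])[a]'(by simp) = false :=
    List.getElem_concat_length (by simp) _
  have h2 : (List.replicate b true)[a]'(by simpa using hab) = true :=
    List.getElem_replicate _
  rw [h.getElem (by simp)] at h1
  rw [h1] at h2; exact Bool.noConfusion h2

private lemma prefix_aux3 (a b : ℕ) (hab : a < b) :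
    ¬ (List.replicate b true <+: List.replicate a true ++ [false]) := by
  intro h
  have hlen := h.length_le
  simp at hlen
  have hb : b = a + 1 := by omega
  subst hb
  have h1 : (List.replicate (a+1) true)[a]'(by simp) = true :=
    List.getElem_replicate _
  have h2 : (List.replicate a true ++ [false])[a]'(by simp) = false :=
    List.getElem_concat_length (by simp) _
  rw [h.getElem (by simp)] at h1
  rw [h1] at h2; exact Bool.noConfusion h2

/-- For every positive n there is a source of size n and a prefix code whose
competitive advantage over a Shannon–Fano code (lengths ⌈log₂(1/p)⌉) is at
least 1 − 2^{−n+2}, and whose expected length is at least 1 − 2^{−n+2}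
smaller than that of the Shannon–Fano code. -/
theorem exists_advantage_over_shannon_fano (n : ℕ) (hn : 1 ≤ n) :
    ∃ (p : Fin n → ℝ) (c : Fin n → List Bool),
      (∀ i, 0 < p i) ∧ (∑ i, p i = 1) ∧
      (∀ i j, i ≠ j → ¬ (c i <+: c j)) ∧
      (∑ i ∈ Finset.univ.filter
          (fun i => ((c i).length : ℤ) < ⌈Real.logb 2 (1 / p i)⌉), p i)
        - (∑ i ∈ Finset.univ.filter
          (fun i => ⌈Real.logb 2 (1 / p i)⌉ < ((c i).length : ℤ)), p i)
        ≥ 1 - (2:ℝ) ^ (2 - (n:ℤ)) ∧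
      (∑ i, p i * (⌈Real.logb 2 (1 / p i)⌉ : ℝ)) - (∑ i, p i * (c i).length)
        ≥ 1 - (2:ℝ) ^ (2 - (n:ℤ)) := by
  obtain ⟨m, rfl⟩ : ∃ m, n = m + 1 := ⟨n - 1, (Nat.succ_pred_eq_of_pos hn).symm⟩
  rcases Nat.eq_zero_or_pos m with hm | hm
  · subst hm
    refine ⟨fun _ => 1, fun _ => [], fun i => one_pos, by simp, ?_, ?_, ?_⟩
    · intro i j hij
      exact absurd (Fin.ext (by omega)) hij
    · simp [Real.logb_one]
    · simp [Real.logb_one]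
  -- main case: m ≥ 1
  have h2pos : (0:ℝ) < 2 ^ (m+1) := by positivity
  have h4 : (4:ℝ) ≤ 2 ^ (m+1) := by
    calc (4:ℝ) = 2^2 := by norm_num
    _ ≤ 2^(m+1) := pow_le_pow_right₀ (by norm_num) (by omega)
  set a : ℝ := (2^(m+1) - 3)/(2^(m+1) - 2) with ha_def
  have hden : (0:ℝ) < 2^(m+1) - 2 := by linarith
  have ha_pos : 0 < a := by
    apply div_pos (by linarith) hden
  have ha_half : 1/2 ≤ a := by
    rw [ha_def, le_div_iff₀ hden]; linarith
  have ha_lt : a < 1 := by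
    rw [ha_def, div_lt_one hden]; linarith
  have hpm : (0:ℝ) < 2^m := by positivity
  set q : Fin (m+1) → ℝ :=
    fun i => if (i:ℕ) = m then 3/2^(m+1) else a/2^((i:ℕ)+1) with hq
  set C : Fin (m+1) → List Bool :=
    fun i => if (i:ℕ) = m then List.replicate m true
             else List.replicate (i:ℕ) true ++ [false] with hC
  have hq_last : q (Fin.last m) = 3/2^(m+1) := by simp [hq]
  have hsum : ∑ i, q i = 1 := by
    rw [Fin.sum_univ_castSucc, hq_last]
    have hterm : ∀ i : Fin m,
        q i.castSucc = a * ((1:ℝ)/2^((i:ℕ)+1)) := by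
      intro i
      have : ((i.castSucc : Fin (m+1)) : ℕ) = (i:ℕ) := rfl
      rw [hq]
      dsimp only
      rw [this, if_neg (Nat.ne_of_lt i.isLt)]
      ring
    rw [Finset.sum_congr rfl (fun i _ => hterm i), ← Finset.mul_sum,
      Fin.sum_univ_eq_sum_range (fun k => (1:ℝ)/2^(k+1)), geom_aux, ha_def,
      pow_succ]
    have h1 : (2:ℝ)^m ≠ 0 := ne_of_gt hpm
    have h2 : (2:ℝ)^m * 2 - 2 ≠ 0 := by
      have : (2:ℝ)^(m+1) = 2^m*2 := pow_succ 2 m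
      rw [this] at hden; linarith
    have h3 : (2:ℝ)^m - 1 ≠ 0 := by intro h; apply h2; linarith
    field_simp
    ring
  have hS : ∀ i : Fin (m+1),
      ⌈Real.logb 2 (1 / q i)⌉ = if (i:ℕ) = m then (m:ℤ) else (i:ℤ)+2 := by
    intro i
    by_cases hi : (i:ℕ) = m
    · rw [if_pos hi, hq]; dsimp only; rw [if_pos hi]
      apply ceil_logb_eq _ _ (by positivity)
      · rw [zpow_neg, zpow_natCast, pow_succ, inv_le_iff_one_le_mul₀ hpm]
        rw [div_mul_eq_mul_div, le_div_iff₀ (by positivity)]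
        nlinarith
      · rw [show (1:ℤ) - (m:ℤ) = 1 + (-(m:ℤ)) by ring, zpow_add₀
          (by norm_num : (2:ℝ) ≠ 0), zpow_neg, zpow_natCast, zpow_one,
          pow_succ, div_lt_iff₀ (by positivity)]
        have : (2:ℝ) * (2^m)⁻¹ * (2^m*2) = 4 := by field_simp; ring
        rw [this]; norm_num
    · rw [if_neg hi, hq]; dsimp only; rw [if_neg hi]
      have hip : (0:ℝ) < 2^((i:ℕ)+1) := by positivity
      apply ceil_logb_eq _ _ (by positivity)
      · rw [show -((i:ℤ)+2) = -((((i:ℕ)+2 : ℕ)):ℤ) by push_cast; ring,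
          zpow_neg, zpow_natCast, le_div_iff₀ hip]
        have : ((2:ℝ)^((i:ℕ)+2))⁻¹ * 2^((i:ℕ)+1) = 1/2 := by
          rw [pow_succ]; field_simp
        rw [this]; exact ha_half
      · rw [show (1:ℤ)-((i:ℤ)+2) = -((((i:ℕ)+1 : ℕ)):ℤ) by push_cast; ring,
          zpow_neg, zpow_natCast, div_lt_iff₀ hip, inv_mul_cancel₀ (ne_of_gt hip)]
        exact ha_lt
  have hlen : ∀ i : Fin (m+1),
      ((C i).length : ℤ) = if (i:ℕ) = m then (m:ℤ) else (i:ℤ)+1 := by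
    intro i
    by_cases hi : (i:ℕ) = m <;> simp [hC, hi]
  have hmass : ∑ i ∈ Finset.univ.filter (fun i : Fin (m+1) => ¬((i:ℕ) = m)), q i
      = 1 - 3/2^(m+1) := by
    have hsplit := Finset.sum_filter_add_sum_filter_not Finset.univ
      (fun i : Fin (m+1) => (i:ℕ) = m) q
    have hone : Finset.univ.filter (fun i : Fin (m+1) => (i:ℕ) = m)
        = {Fin.last m} := by
      ext i
      simp [Fin.ext_iff, Fin.val_last]
    rw [hone, Finset.sum_singleton, hq_last, hsum] at hsplit
    linarith
  have hbound : (2:ℝ)^(2 - ((m+1:ℕ):ℤ)) = 4/2^(m+1) := by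
    rw [zpow_sub₀ (by norm_num : (2:ℝ) ≠ 0), zpow_natCast]
    norm_num
  have h34 : (3:ℝ)/2^(m+1) ≤ 4/2^(m+1) := by gcongr <;> norm_num
  refine ⟨q, C, ?_, hsum, ?_, ?_, ?_⟩
  · intro i
    rw [hq]; dsimp only
    split
    · positivity
    · positivity
  · intro i j hij hpre
    rw [hC] at hpre; dsimp only at hpre
    have hi' := i.isLt
    have hj' := j.isLt
    by_cases hi : (i:ℕ) = m <;> by_cases hj : (j:ℕ) = m
    · exact hij (Fin.ext (by omega))
    · rw [if_pos hi, if_neg hj] at hpre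
      exact prefix_aux3 (j:ℕ) m (by omega) hpre
    · rw [if_neg hi, if_pos hj] at hpre
      exact prefix_aux2 (i:ℕ) m (by omega) hpre
    · rw [if_neg hi, if_neg hj] at hpre
      exact hij (Fin.ext (prefix_aux1 _ _ hpre))
  · have hf1 : Finset.univ.filter
        (fun i => ((C i).length : ℤ) < ⌈Real.logb 2 (1 / q i)⌉)
        = Finset.univ.filter (fun i : Fin (m+1) => ¬((i:ℕ) = m)) := by
      apply Finset.filter_congr
      intro i _
      rw [hS i, hlen i]
      by_cases hi : (i:ℕ) = m <;> simp [hi]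
    have hf2 : Finset.univ.filter
        (fun i => ⌈Real.logb 2 (1 / q i)⌉ < ((C i).length : ℤ))
        = (∅ : Finset (Fin (m+1))) := by
      rw [Finset.filter_eq_empty_iff]
      intro i _
      rw [hS i, hlen i]
      by_cases hi : (i:ℕ) = m <;> simp [hi]
    rw [hf1, hf2, hmass, Finset.sum_empty, hbound]
    linarith
  · have hterm : ∀ i : Fin (m+1),
        q i * (⌈Real.logb 2 (1 / q i)⌉ : ℝ) - q i * ((C i).length : ℝ)
        = if (i:ℕ) = m then 0 else q i := by
      intro i
      have hlR : ((C i).length : ℝ) = (((C i).length : ℤ) : ℝ) := by push_cast; rfl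
      rw [hS i, hlR, hlen i]
      by_cases hi : (i:ℕ) = m <;> simp [hi] <;> push_cast <;> ring
    rw [← Finset.sum_sub_distrib, Finset.sum_congr rfl (fun i _ => hterm i),
      Finset.sum_ite, Finset.sum_const_zero, zero_add, hmass, hbound]
    linarith
end

section
/- Let a source have alphabet S with a Huffman code H whose codeword lengths satisfy ∑_{x∈S} 2^{−l_H(x)} = 1, and let C be a prefix code with positive competitive advantage over H. Define W = {x : l_C(x) < l_H(x)} and L = {x : l_C(x) > l_H(x)}. Then ∑_{x∈W} 2^{−l_H(x)} < ∑_{x∈L} 2^{−l_H(x)}. -/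
/-- If a prefix code C has positive competitive advantage over a Huffman code
H (complete, expected-length optimal), then the Huffman-Kraft sum of the win
set W is strictly less than that of the loss set L. -/
theorem win_kraft_lt_loss_kraft (n : ℕ) (p : Fin n → ℝ)
    (hpos : ∀ i, 0 < p i) (hsum : ∑ i, p i = 1)
    (lH lC : Fin n → ℕ)
    (hHkraft : ∑ i, ((1:ℝ)/2) ^ (lH i) = 1)
    (hCkraft : ∑ i, ((1:ℝ)/2) ^ (lC i) ≤ 1)
    (hopt : ∀ l' : Fin n → ℕ, (∑ i, ((1:ℝ)/2) ^ (l' i) ≤ 1) →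
      ∑ i, p i * lH i ≤ ∑ i, p i * l' i)
    (hadv : 0 < (∑ i ∈ Finset.univ.filter (fun i => lC i < lH i), p i)
              - (∑ i ∈ Finset.univ.filter (fun i => lH i < lC i), p i)) :
    ∑ i ∈ Finset.univ.filter (fun i => lC i < lH i), ((1:ℝ)/2) ^ (lH i) <
    ∑ i ∈ Finset.univ.filter (fun i => lH i < lC i), ((1:ℝ)/2) ^ (lH i) := by
  classical
  set W := Finset.univ.filter (fun i => lC i < lH i) with hWdef
  set L := Finset.univ.filter (fun i => lH i < lC i) with hLdef
  set E := Finset.univ.filter (fun i => lC i = lH i) with hEdef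
  have hdisjWL : Disjoint W L := by
    rw [Finset.disjoint_left]; intro i hi hi'
    simp only [hWdef, hLdef, Finset.mem_filter] at hi hi'; omega
  have hdisjWLE : Disjoint (W ∪ L) E := by
    rw [Finset.disjoint_left]; intro i hi hi'
    simp only [hWdef, hLdef, hEdef, Finset.mem_filter, Finset.mem_union] at hi hi'
    omega
  have hpart : ∀ f : Fin n → ℝ,
      ∑ i, f i = ∑ i ∈ W, f i + ∑ i ∈ L, f i + ∑ i ∈ E, f i := by
    intro f
    have h1 : (Finset.univ : Finset (Fin n)) = W ∪ L ∪ E := by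
      ext i
      simp only [hWdef, hLdef, hEdef, Finset.mem_union, Finset.mem_filter,
        Finset.mem_univ, true_and, true_iff]
      omega
    rw [h1, Finset.sum_union hdisjWLE, Finset.sum_union hdisjWL]
  -- on W, (1/2)^(lH i) ≤ (1/2) * (1/2)^(lC i)
  have hWbd : 2 * ∑ i ∈ W, ((1:ℝ)/2) ^ (lH i) ≤ ∑ i ∈ W, ((1:ℝ)/2) ^ (lC i) := by
    rw [Finset.mul_sum]
    apply Finset.sum_le_sum
    intro i hi
    simp only [hWdef, Finset.mem_filter] at hi
    have hle : lC i + 1 ≤ lH i := hi.2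
    have := pow_le_pow_of_le_one (by norm_num : (0:ℝ) ≤ 1/2)
      (by norm_num : (1:ℝ)/2 ≤ 1) hle
    calc 2 * ((1:ℝ)/2) ^ (lH i) ≤ 2 * ((1:ℝ)/2) ^ (lC i + 1) := by linarith
      _ = ((1:ℝ)/2) ^ (lC i) := by ring
  have hEbd : ∑ i ∈ E, ((1:ℝ)/2) ^ (lC i) = ∑ i ∈ E, ((1:ℝ)/2) ^ (lH i) := by
    apply Finset.sum_congr rfl
    intro i hi
    simp only [hEdef, Finset.mem_filter] at hi
    rw [hi.2]
  have hC' := hCkraft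
  rw [hpart (fun i => ((1:ℝ)/2) ^ (lC i))] at hC'
  have hH' := hHkraft
  rw [hpart (fun i => ((1:ℝ)/2) ^ (lH i))] at hH'
  -- key : S_W + ∑_L (1/2)^lC ≤ S_L
  have key : ∑ i ∈ W, ((1:ℝ)/2) ^ (lH i) + ∑ i ∈ L, ((1:ℝ)/2) ^ (lC i)
      ≤ ∑ i ∈ L, ((1:ℝ)/2) ^ (lH i) := by
    linarith
  rcases L.eq_empty_or_nonempty with hLe | hLne
  · -- contradiction: W nonempty so S_W > 0, but key gives S_W ≤ 0
    have hLp : ∑ i ∈ L, p i = 0 := by rw [hLe]; simp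
    have hWp : 0 < ∑ i ∈ W, p i := by linarith
    have hWne : W.Nonempty := by
      by_contra h
      rw [Finset.not_nonempty_iff_eq_empty] at h
      rw [h] at hWp; simp at hWp
    have hSW : 0 < ∑ i ∈ W, ((1:ℝ)/2) ^ (lH i) :=
      Finset.sum_pos (fun i _ => by positivity) hWne
    rw [hLe, Finset.sum_empty] at key
    linarith
  · have hLC : 0 < ∑ i ∈ L, ((1:ℝ)/2) ^ (lC i) :=
      Finset.sum_pos (fun i _ => by positivity) hLne
    linarith
end

section
/- For any source with a Huffman code H, if U and V are disjoint subsets of the source alphabet whose Huffman-Kraft sums satisfy K(U) < K(V), then there exists a prefix code C (a length assignment satisfying the Kraft inequality) such that l_C(x) = l_H(x) − 1 for x ∈ U, l_C(x) = l_H(x) + k for x ∈ V for some integer k with K(U) ≤ (1 − 2^{−k})K(V), and l_C(x) = l_H(x) otherwise; in particular U = {x : l_C(x) < l_H(x)} and V = {x : l_C(x) > l_H(x)}. -/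
/-- Given a complete Huffman code and disjoint sets U, V with Huffman-Kraft
sums K(U) < K(V), there is a length assignment lC satisfying the Kraft
inequality which shortens exactly the codewords of U (by one) and lengthens
exactly those of V (by k, where K(U) ≤ (1 − 2^{−k})K(V)). -/
theorem exists_code_winning_on_U (n : ℕ) (lH : Fin n → ℕ)
    (hHkraft : ∑ i, ((1:ℝ)/2) ^ (lH i) = 1)
    (U V : Finset (Fin n)) (hdisj : Disjoint U V)
    (hK : ∑ x ∈ U, ((1:ℝ)/2) ^ (lH x) < ∑ x ∈ V, ((1:ℝ)/2) ^ (lH x)) :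
    ∃ (k : ℕ) (lC : Fin n → ℕ), 1 ≤ k ∧
      (∑ x ∈ U, ((1:ℝ)/2) ^ (lH x))
        ≤ (1 - ((1:ℝ)/2) ^ k) * (∑ x ∈ V, ((1:ℝ)/2) ^ (lH x)) ∧
      (∑ i, ((1:ℝ)/2) ^ (lC i) ≤ 1) ∧
      (∀ x ∈ U, lC x + 1 = lH x) ∧
      (∀ x ∈ V, lC x = lH x + k) ∧
      (∀ x, x ∉ U → x ∉ V → lC x = lH x) ∧
      U = Finset.univ.filter (fun x => lC x < lH x) ∧
      V = Finset.univ.filter (fun x => lH x < lC x) := by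
  set KU := ∑ x ∈ U, ((1:ℝ)/2) ^ (lH x) with hKU
  set KV := ∑ x ∈ V, ((1:ℝ)/2) ^ (lH x) with hKV
  have hpos : ∀ x : Fin n, (0:ℝ) < ((1:ℝ)/2) ^ (lH x) := fun x => by positivity
  have hKU0 : 0 ≤ KU := Finset.sum_nonneg fun x _ => (hpos x).le
  have hKV0 : 0 < KV := lt_of_le_of_lt hKU0 hK
  have hsum_le : KU + KV ≤ 1 := by
    rw [← hHkraft, ← Finset.sum_union hdisj]
    exact Finset.sum_le_sum_of_subset_of_nonneg (Finset.subset_univ _)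
      (fun x _ _ => (hpos x).le)
  -- choose k
  obtain ⟨m, hm⟩ := exists_pow_lt_of_lt_one (x := (KV - KU)/KV)
    (div_pos (by linarith) hKV0) (by norm_num : (1:ℝ)/2 < 1)
  set k := max m 1 with hk
  have hk1 : 1 ≤ k := le_max_right m 1
  have hkk : ((1:ℝ)/2) ^ k ≤ ((1:ℝ)/2) ^ m :=
    pow_le_pow_of_le_one (by norm_num) (by norm_num) (le_max_left m 1)
  have hmain : KU ≤ (1 - ((1:ℝ)/2) ^ k) * KV := by
    have h1 : ((1:ℝ)/2) ^ m * KV < KV - KU := (lt_div_iff₀ hKV0).mp hm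
    nlinarith [mul_le_mul_of_nonneg_right hkk hKV0.le]
  -- lH ≥ 1 on U
  have hU1 : ∀ x ∈ U, 1 ≤ lH x := by
    intro x hx
    by_contra h
    have hx0 : lH x = 0 := by omega
    have h1 : ((1:ℝ)/2) ^ (lH x) ≤ KU := Finset.single_le_sum (f := fun x => ((1:ℝ)/2) ^ (lH x))
      (fun x _ => (hpos x).le) hx
    rw [hx0, pow_zero] at h1
    linarith
  refine ⟨k, fun x => if x ∈ U then lH x - 1 else if x ∈ V then lH x + k else lH x,
    hk1, hmain, ?_, ?_, ?_, ?_, ?_, ?_⟩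
  · -- Kraft inequality
    have hsplit : ∑ i, ((1:ℝ)/2) ^ (if i ∈ U then lH i - 1 else if i ∈ V then lH i + k else lH i)
        - ∑ i, ((1:ℝ)/2) ^ (lH i)
        = ∑ x ∈ U ∪ V, (((1:ℝ)/2) ^ (if x ∈ U then lH x - 1 else if x ∈ V then lH x + k else lH x)
            - ((1:ℝ)/2) ^ (lH x)) := by
      rw [← Finset.sum_sub_distrib]
      refine (Finset.sum_subset (Finset.subset_univ _) ?_).symm
      intro x _ hx
      simp only [Finset.mem_union, not_or] at hx
      simp [hx.1, hx.2]
    have hUterm : ∑ x ∈ U, (((1:ℝ)/2) ^ (if x ∈ U then lH x - 1 else if x ∈ V then lH x + k else lH x)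
        - ((1:ℝ)/2) ^ (lH x)) = KU := by
      rw [hKU]
      apply Finset.sum_congr rfl
      intro x hx
      have h1 := hU1 x hx
      obtain ⟨a, ha⟩ : ∃ a, lH x = a + 1 := ⟨lH x - 1, by omega⟩
      simp only [hx, if_true, ha, Nat.add_sub_cancel, pow_succ]
      ring
    have hVterm : ∑ x ∈ V, (((1:ℝ)/2) ^ (if x ∈ U then lH x - 1 else if x ∈ V then lH x + k else lH x)
        - ((1:ℝ)/2) ^ (lH x)) = (((1:ℝ)/2) ^ k - 1) * KV := by
      rw [hKV, Finset.mul_sum]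
      apply Finset.sum_congr rfl
      intro x hx
      have hxU : x ∉ U := fun h => Finset.disjoint_left.mp hdisj h hx
      simp only [hxU, if_false, hx, if_true]
      rw [pow_add]
      ring
    have := hsplit
    rw [Finset.sum_union hdisj, hUterm, hVterm, hHkraft] at this
    nlinarith
  · intro x hx
    have := hU1 x hx
    simp only [hx, if_true]
    omega
  · intro x hx
    have hxU : x ∉ U := fun h => Finset.disjoint_left.mp hdisj h hx
    simp [hxU, hx]
  · intro x hxU hxV
    simp [hxU, hxV]
  · ext x
    simp only [Finset.mem_filter, Finset.mem_univ, true_and]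
    constructor
    · intro hx
      have := hU1 x hx
      simp only [hx, if_true]
      omega
    · intro hx
      by_contra hxU
      by_cases hxV : x ∈ V <;> simp [hxU, hxV] at hx <;> omega
  · ext x
    simp only [Finset.mem_filter, Finset.mem_univ, true_and]
    constructor
    · intro hx
      have hxU : x ∉ U := fun h => Finset.disjoint_left.mp hdisj h hx
      simp only [hxU, if_false, hx, if_true]
      omega
    · intro hx
      by_contra hxV
      by_cases hxU : x ∈ U
      · have := hU1 x hxU; simp [hxU] at hx; omega
      · simp [hxU, hxV] at hx
end

section
/- For any source and any Huffman code, if U and V are disjoint subsets of the source alphabet with Huffman-Kraft sums K(U) < K(V) and probabilities P(U) > P(V), then the Huffman code is not competitively optimal: there exists a prefix code whose competitive advantage over the Huffman code is positive. -/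
/-- If disjoint sets U, V satisfy K(U) < K(V) (Huffman-Kraft sums) and
P(U) > P(V), then the Huffman code is not competitively optimal: some prefix
code has positive competitive advantage over it. -/
theorem huffman_not_competitively_optimal_of_kraft_prob_disagree
    (n : ℕ) (p : Fin n → ℝ) (hpos : ∀ i, 0 < p i) (hsum : ∑ i, p i = 1)
    (lH : Fin n → ℕ) (hHkraft : ∑ i, ((1:ℝ)/2) ^ (lH i) = 1)
    (U V : Finset (Fin n)) (hdisj : Disjoint U V)
    (hK : ∑ x ∈ U, ((1:ℝ)/2) ^ (lH x) < ∑ x ∈ V, ((1:ℝ)/2) ^ (lH x))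
    (hP : ∑ x ∈ V, p x < ∑ x ∈ U, p x) :
    ∃ lC : Fin n → ℕ, (∑ i, ((1:ℝ)/2) ^ (lC i) ≤ 1) ∧
      0 < (∑ i ∈ Finset.univ.filter (fun i => lC i < lH i), p i)
        - (∑ i ∈ Finset.univ.filter (fun i => lH i < lC i), p i) := by
  set KU := ∑ x ∈ U, ((1:ℝ)/2) ^ (lH x) with hKU
  set KV := ∑ x ∈ V, ((1:ℝ)/2) ^ (lH x) with hKV
  have hKU0 : 0 ≤ KU := Finset.sum_nonneg fun i _ => by positivity
  have hKV0 : 0 < KV := lt_of_le_of_lt hKU0 hK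
  -- every symbol in U has Huffman length ≥ 1
  have hU1 : ∀ i ∈ U, 1 ≤ lH i := by
    intro i hi
    by_contra h
    have h0 : lH i = 0 := by omega
    have hiV : i ∉ V := Finset.disjoint_left.mp hdisj hi
    have hle := Finset.sum_le_sum_of_subset_of_nonneg
      (Finset.subset_univ (insert i V))
      (fun j _ _ => (by positivity : (0:ℝ) ≤ ((1:ℝ)/2)^(lH j)))
    rw [Finset.sum_insert hiV, h0, hHkraft] at hle
    simp only [pow_zero] at hle
    linarith
  -- choose M with KV * (1/2)^M < KV - KU
  obtain ⟨m, hm⟩ := exists_pow_lt_of_lt_one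
    (show (0:ℝ) < (KV - KU)/KV from div_pos (by linarith) hKV0)
    (by norm_num : (1:ℝ)/2 < 1)
  set M := m + 1 with hM
  have hMlt : ((1:ℝ)/2)^M < (KV - KU)/KV :=
    lt_of_le_of_lt (pow_le_pow_of_le_one (by norm_num) (by norm_num) (by omega)) hm
  have hKmain : ((1:ℝ)/2)^M * KV < KV - KU := (lt_div_iff₀ hKV0).mp hMlt
  classical
  refine ⟨fun i => if i ∈ U then lH i - 1 else if i ∈ V then lH i + M else lH i, ?_, ?_⟩
  · -- Kraft inequality for lC
    set lC : Fin n → ℕ := fun i => if i ∈ U then lH i - 1 else if i ∈ V then lH i + M else lH i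
      with hlC
    have hdiff : ∑ i, (((1:ℝ)/2)^(lC i) - ((1:ℝ)/2)^(lH i))
        = KU + (((1:ℝ)/2)^M - 1) * KV := by
      have hzero : ∀ i ∈ Finset.univ, i ∉ U ∪ V →
          (((1:ℝ)/2)^(lC i) - ((1:ℝ)/2)^(lH i)) = 0 := by
        intro i _ hi
        rw [Finset.mem_union] at hi
        push_neg at hi
        simp [hlC, hi.1, hi.2]
      rw [← Finset.sum_subset (Finset.subset_univ (U ∪ V)) hzero,
        Finset.sum_union hdisj]
      have hUpart : ∑ i ∈ U, (((1:ℝ)/2)^(lC i) - ((1:ℝ)/2)^(lH i)) = KU := by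
        rw [hKU]
        apply Finset.sum_congr rfl
        intro i hi
        have h2 := hU1 i hi
        have h1 : ((1:ℝ)/2)^(lH i) = ((1:ℝ)/2)^(lH i - 1) * ((1:ℝ)/2) := by
          rw [← pow_succ]
          congr 1
          omega
        simp only [hlC, if_pos hi]
        linarith
      have hVpart : ∑ i ∈ V, (((1:ℝ)/2)^(lC i) - ((1:ℝ)/2)^(lH i))
          = (((1:ℝ)/2)^M - 1) * KV := by
        rw [hKV, Finset.mul_sum]
        apply Finset.sum_congr rfl
        intro i hi
        have hiU : i ∉ U := Finset.disjoint_right.mp hdisj hi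
        simp only [hlC, if_neg hiU, if_pos hi, pow_add]
        ring
      rw [hUpart, hVpart]
    have hsplit : ∑ i, ((1:ℝ)/2)^(lC i)
        = (∑ i, (((1:ℝ)/2)^(lC i) - ((1:ℝ)/2)^(lH i))) + ∑ i, ((1:ℝ)/2)^(lH i) := by
      rw [← Finset.sum_add_distrib]
      apply Finset.sum_congr rfl
      intro i _
      ring
    rw [hsplit, hdiff, hHkraft]
    nlinarith
  · -- positive advantage
    have hfU : (Finset.univ.filter (fun i =>
        (if i ∈ U then lH i - 1 else if i ∈ V then lH i + M else lH i) < lH i)) = U := by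
      ext i
      by_cases hiU : i ∈ U
      · have := hU1 i hiU
        simp only [Finset.mem_filter, Finset.mem_univ, true_and, if_pos hiU]
        constructor
        · intro _; exact hiU
        · intro _; omega
      · by_cases hiV : i ∈ V
        · simp only [Finset.mem_filter, Finset.mem_univ, true_and, if_neg hiU, if_pos hiV]
          constructor
          · intro h; omega
          · intro h; exact absurd h hiU
        · simp [hiU, hiV]
    have hfV : (Finset.univ.filter (fun i =>
        lH i < (if i ∈ U then lH i - 1 else if i ∈ V then lH i + M else lH i))) = V := by
      ext i
      by_cases hiU : i ∈ U
      · have := hU1 i hiU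
        have hiV : i ∉ V := Finset.disjoint_left.mp hdisj hiU
        simp only [Finset.mem_filter, Finset.mem_univ, true_and, if_pos hiU]
        constructor
        · intro h; omega
        · intro h; exact absurd h hiV
      · by_cases hiV : i ∈ V
        · simp only [Finset.mem_filter, Finset.mem_univ, true_and, if_neg hiU, if_pos hiV]
          constructor
          · intro _; exact hiV
          · intro _; omega
        · simp [hiU, hiV]
    rw [hfU, hfV]
    linarith
end

section
/- In a Huffman code tree, if y and y' are sibling nodes, z is a leaf descendant of y, and P(z) < P(y) − P(y'), then the Huffman code is not competitively optimal for the source. -/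
/-- In a Huffman code tree, if Y and Y' are the leaf-descendant sets of two
sibling nodes at depth d (so they are disjoint and both have Kraft sum
2^{−d}), z is a leaf in Y, and P(z) < P(Y) − P(Y'), then the Huffman code is
not competitively optimal: some prefix code has positive competitive
advantage over it. -/
theorem huffman_not_opt_of_sibling_gap
    (n : ℕ) (p : Fin n → ℝ) (hpos : ∀ i, 0 < p i) (hsum : ∑ i, p i = 1)
    (lH : Fin n → ℕ) (hHkraft : ∑ i, ((1:ℝ)/2) ^ (lH i) = 1)
    (Y Y' : Finset (Fin n)) (hdisj : Disjoint Y Y')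
    (d : ℕ) (hd : 1 ≤ d)
    (hKY : ∑ x ∈ Y, ((1:ℝ)/2) ^ (lH x) = ((1:ℝ)/2) ^ d)
    (hKY' : ∑ x ∈ Y', ((1:ℝ)/2) ^ (lH x) = ((1:ℝ)/2) ^ d)
    (z : Fin n) (hz : z ∈ Y)
    (hpz : p z < ∑ x ∈ Y, p x - ∑ x ∈ Y', p x) :
    ∃ lC : Fin n → ℕ, (∑ i, ((1:ℝ)/2) ^ (lC i) ≤ 1) ∧
      0 < (∑ i ∈ Finset.univ.filter (fun i => lC i < lH i), p i)
        - (∑ i ∈ Finset.univ.filter (fun i => lH i < lC i), p i) := by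
  set a : ℝ := (1:ℝ)/2 with ha
  have ha0 : (0:ℝ) < a := by norm_num [ha]
  have ha1 : a < 1 := by norm_num [ha]
  have hanti := pow_right_strictAnti₀ ha0 ha1
  -- every leaf of Y has depth ≥ 1
  have hdepth : ∀ i ∈ Y, 1 ≤ lH i := by
    intro i hi
    have h1 : a ^ (lH i) ≤ ∑ x ∈ Y, a ^ (lH x) :=
      Finset.single_le_sum (f := fun x => a ^ (lH x))
        (fun x _ => le_of_lt (pow_pos ha0 _)) hi
    have h2 : a ^ d ≤ a ^ 1 := hanti.antitone hd
    have h3 : a ^ (lH i) ≤ a ^ 1 := le_trans (h1.trans_eq hKY) h2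
    exact hanti.le_iff_ge.mp h3
  have hzU : z ∉ Y' := fun h => (Finset.disjoint_left.mp hdisj hz) h
  set U : Finset (Fin n) := Y.erase z with hU
  have hUY : ∀ i, i ∈ U → i ∈ Y := fun i hi => Finset.mem_of_mem_erase hi
  have hUY' : ∀ i, i ∈ U → i ∉ Y' := fun i hi h =>
    (Finset.disjoint_left.mp hdisj (hUY i hi)) h
  set m := lH z with hm
  have hm1 : 1 ≤ m := hdepth z hz
  set lC : Fin n → ℕ :=
    fun i => if i ∈ U then lH i - 1 else if i ∈ Y' then lH i + m else lH i with hlC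
  have hdisjUY' : Disjoint U Y' := Finset.disjoint_left.mpr hUY'
  refine ⟨lC, ?_, ?_⟩
  · -- Kraft inequality
    have key : ∑ i, (a ^ (lC i) - a ^ (lH i))
        = ∑ i ∈ U, (a ^ (lH i - 1) - a ^ (lH i))
          + ∑ i ∈ Y', (a ^ (lH i + m) - a ^ (lH i)) := by
      have h0 : ∑ i, (a ^ (lC i) - a ^ (lH i))
          = ∑ i ∈ U ∪ Y', (a ^ (lC i) - a ^ (lH i)) := by
        refine (Finset.sum_subset (Finset.subset_univ (U ∪ Y')) ?_).symm
        intro i _ hi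
        simp only [Finset.mem_union, not_or] at hi
        simp [hlC, hi.1, hi.2]
      rw [h0, Finset.sum_union hdisjUY']
      congr 1
      · apply Finset.sum_congr rfl
        intro i hi
        simp [hlC, hi]
      · apply Finset.sum_congr rfl
        intro i hi
        have hnU : i ∉ U := fun hh => hUY' i hh hi
        simp [hlC, hi, hnU]
    have hsumU : ∑ i ∈ U, a ^ (lH i) = a ^ d - a ^ m := by
      rw [hU, Finset.sum_erase_eq_sub hz, hKY]
    have hhalve : ∑ i ∈ U, a ^ (lH i - 1) = 2 * ∑ i ∈ U, a ^ (lH i) := by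
      rw [Finset.mul_sum]
      apply Finset.sum_congr rfl
      intro i hi
      have h1 : 1 ≤ lH i := hdepth i (hUY i hi)
      have h2 : lH i = (lH i - 1) + 1 := (Nat.succ_pred_eq_of_pos h1).symm
      rw [h2, pow_succ]
      rw [Nat.add_sub_cancel, ha]
      ring
    have hY'sum : ∑ i ∈ Y', a ^ (lH i + m) = a ^ m * a ^ d := by
      rw [← hKY', Finset.mul_sum]
      apply Finset.sum_congr rfl
      intro i _
      rw [pow_add]; ring
    have key2 : ∑ i, a ^ (lC i) - ∑ i, a ^ (lH i) = a ^ m * (a ^ d - 1) := by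
      rw [← Finset.sum_sub_distrib, key, Finset.sum_sub_distrib, Finset.sum_sub_distrib,
        hhalve, hsumU, hY'sum, hKY']
      ring
    have had : a ^ d ≤ 1 := pow_le_one₀ (le_of_lt ha0) (le_of_lt ha1)
    have hneg : a ^ m * (a ^ d - 1) ≤ 0 :=
      mul_nonpos_of_nonneg_of_nonpos (le_of_lt (pow_pos ha0 m)) (by linarith)
    rw [hHkraft] at key2
    linarith
  · -- positive competitive advantage
    have hf1 : Finset.univ.filter (fun i => lC i < lH i) = U := by
      ext i
      simp only [Finset.mem_filter, Finset.mem_univ, true_and]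
      by_cases h1 : i ∈ U
      · have hge := hdepth i (hUY i h1)
        simp only [hlC, h1, if_true, iff_true_intro h1, iff_true]
        omega
      · by_cases h2 : i ∈ Y' <;>
          simp only [hlC, h1, h2, if_true, if_false, iff_false_intro h1, iff_false] <;> omega
    have hf2 : Finset.univ.filter (fun i => lH i < lC i) = Y' := by
      ext i
      simp only [Finset.mem_filter, Finset.mem_univ, true_and]
      by_cases h1 : i ∈ U
      · have h2 : i ∉ Y' := hUY' i h1
        simp only [hlC, h1, if_true, iff_false_intro h2, iff_false]
        omega
      · by_cases h2 : i ∈ Y'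
        · simp only [hlC, h1, h2, if_true, if_false, iff_true_intro h2, iff_true]
          omega
        · simp only [hlC, h1, h2, if_false, iff_false_intro h2, iff_false]
          omega
    rw [hf1, hf2]
    have hUsum : ∑ i ∈ U, p i = ∑ x ∈ Y, p x - p z := Finset.sum_erase_eq_sub hz
    linarith
end

section
/- Let l : S → ℕ be the length function of a complete, strongly monotone prefix code for a source with probability P, and let A be a nonempty proper subset of S with Kraft sum K(A) = ∑_{x∈A} 2^{−l(x)} having binary expansion 0.b_1b_2...b_k (b_k = 1). Then there exists a partition of A into disjoint (possibly empty) subsets A_1,...,A_k with K(A_i) = b_i·2^{−i} for each i. -/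
lemma subset_sum_pow_two {α : Type*} [DecidableEq α] (w : α → ℕ) :
    ∀ (A : Finset α), (∀ x ∈ A, ∃ e, w x = 2 ^ e) → ∀ t, (∀ x ∈ A, w x ∣ t) →
    t ≤ ∑ x ∈ A, w x → ∃ B ⊆ A, ∑ x ∈ B, w x = t := by
  intro A
  induction A using Finset.strongInduction with
  | _ A ih =>
    intro hpow t hdvd hle
    rcases Nat.eq_zero_or_pos t with ht | ht
    · exact ⟨∅, Finset.empty_subset _, by simp [ht]⟩
    have hA : A.Nonempty := by
      by_contra h
      simp [Finset.not_nonempty_iff_eq_empty.mp h] at hle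
      omega
    obtain ⟨x, hxA, hxmax⟩ := A.exists_max_image w hA
    have hwx : w x ∣ t := hdvd x hxA
    have hwxle : w x ≤ t := Nat.le_of_dvd ht hwx
    obtain ⟨e, he⟩ := hpow x hxA
    have hsum : w x + ∑ y ∈ A.erase x, w y = ∑ y ∈ A, w y :=
      Finset.add_sum_erase A w hxA
    have hss : A.erase x ⊂ A := Finset.erase_ssubset hxA
    have hdvd' : ∀ y ∈ A.erase x, w y ∣ t - w x := by
      intro y hy
      have hyA := Finset.mem_of_mem_erase hy
      obtain ⟨f, hf⟩ := hpow y hyA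
      have hle' : w y ≤ w x := hxmax y hyA
      have : f ≤ e := by
        rw [he, hf] at hle'
        exact (Nat.pow_le_pow_iff_right (by norm_num)).mp hle'
      have hdx : w y ∣ w x := by rw [he, hf]; exact pow_dvd_pow 2 this
      exact Nat.dvd_sub (hdvd y hyA) hdx
    have hle' : t - w x ≤ ∑ y ∈ A.erase x, w y := by omega
    obtain ⟨B, hBsub, hBsum⟩ :=
      ih (A.erase x) hss (fun y hy => hpow y (Finset.mem_of_mem_erase hy)) _ hdvd' hle'
    have hxB : x ∉ B := fun h => Finset.notMem_erase x A (hBsub h)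
    refine ⟨insert x B, ?_, ?_⟩
    · intro y hy
      rcases Finset.mem_insert.mp hy with rfl | hy
      · exact hxA
      · exact Finset.mem_of_mem_erase (hBsub hy)
    · rw [Finset.sum_insert hxB, hBsum]; omega

lemma Icc_insert_left (m N : ℕ) (h : m + 1 ≤ N) :
    Finset.Icc (m+1) N = insert (m+1) (Finset.Icc (m+2) N) := by
  ext x; simp only [Finset.mem_Icc, Finset.mem_insert]; omega

lemma binary_tail_lt (b : ℕ → ℕ) (hb : ∀ i, b i ≤ 1) (M : ℕ) :
    ∀ d m, m + d ≤ M → ∑ i ∈ Finset.Icc (m+1) (m+d), b i * 2 ^ (M - i) < 2 ^ (M - m) := by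
  intro d
  induction d with
  | zero => intro m _; simp
  | succ d ih =>
    intro m hm
    have h1 : m + 1 ≤ m + (d+1) := by omega
    rw [show m + (d+1) = m + 1 + d by omega] at *
    rw [Icc_insert_left m (m+1+d) h1,
      Finset.sum_insert (by simp [Finset.mem_Icc])]
    have h2 := ih (m+1) hm
    rw [show m + 1 + 1 = m + 2 by omega] at h2
    have h3 : b (m+1) * 2 ^ (M - (m+1)) ≤ 2 ^ (M - (m+1)) := by
      have := hb (m+1)
      nlinarith [(pow_pos (show 0 < 2 by norm_num) (M - (m+1)) : 0 < 2 ^ (M - (m+1)))]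
    have h4 : 2 ^ (M - m) = 2 * 2 ^ (M - (m+1)) := by
      rw [← pow_succ']
      congr 1
      omega
    omega

lemma partition_nat {α : Type*} [DecidableEq α] (w : α → ℕ) (b : ℕ → ℕ)
    (hb : ∀ i, b i ≤ 1) (M : ℕ) (hw : ∀ x, ∃ e, w x = 2 ^ e) :
    ∀ d m (A : Finset α), m + d ≤ M →
    (∑ x ∈ A, w x) = ∑ i ∈ Finset.Icc (m+1) (m+d), b i * 2 ^ (M - i) →
    ∃ As : ℕ → Finset α,
      (∀ i j, i ≠ j → Disjoint (As i) (As j)) ∧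
      (∀ j, j ∉ Finset.Icc (m+1) (m+d) → As j = ∅) ∧
      ((Finset.Icc (m+1) (m+d)).biUnion As = A) ∧
      (∀ i ∈ Finset.Icc (m+1) (m+d), ∑ x ∈ As i, w x = b i * 2 ^ (M - i)) := by
  intro d
  induction d with
  | zero =>
    intro m A hm hA
    simp only [Nat.add_zero] at hA ⊢
    rw [Finset.Icc_eq_empty (by omega), Finset.sum_empty] at hA
    have : A = ∅ := by
      by_contra h
      obtain ⟨x, hx⟩ := Finset.nonempty_iff_ne_empty.mpr h
      obtain ⟨e, he⟩ := hw x
      have h1 : w x ≤ ∑ y ∈ A, w y := Finset.single_le_sum (fun _ _ => Nat.zero_le _) hx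
      have h2 : 0 < w x := by rw [he]; positivity
      omega
    subst this
    refine ⟨fun _ => ∅, fun _ _ _ => Finset.disjoint_empty_left _, fun _ _ => rfl, by simp, ?_⟩
    intro i hi
    rw [Finset.Icc_eq_empty (by omega)] at hi
    exact absurd hi (Finset.notMem_empty i)
  | succ d ih =>
    intro m A hm hA
    rw [show m + (d+1) = m + 1 + d by omega] at *
    have h1 : m + 1 ≤ m + 1 + d := by omega
    rw [Icc_insert_left m (m+1+d) h1, Finset.sum_insert (by simp [Finset.mem_Icc])] at hA
    have htail : ∑ i ∈ Finset.Icc (m+1) (m+1+d), b i * 2 ^ (M - i) < 2 ^ (M - m) := by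
      have := binary_tail_lt b hb M (d+1) m (by omega)
      rwa [show m + (d+1) = m + 1 + d by omega] at this
    rw [Icc_insert_left m (m+1+d) h1, Finset.sum_insert (by simp [Finset.mem_Icc])] at htail
    have hSlt : ∑ x ∈ A, w x < 2 ^ (M - m) := by omega
    have hdvd : ∀ x ∈ A, w x ∣ b (m+1) * 2 ^ (M - (m+1)) := by
      intro x hx
      obtain ⟨e, he⟩ := hw x
      have h2 : w x ≤ ∑ y ∈ A, w y := Finset.single_le_sum (fun _ _ => Nat.zero_le _) hx
      have h3 : (2:ℕ) ^ e < 2 ^ (M - m) := by omega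
      have h4 : e < M - m := (Nat.pow_lt_pow_iff_right (by norm_num)).mp h3
      have h5 : e ≤ M - (m+1) := by omega
      exact Dvd.dvd.mul_left (he ▸ pow_dvd_pow 2 h5) _
    have hle : b (m+1) * 2 ^ (M - (m+1)) ≤ ∑ x ∈ A, w x := by omega
    obtain ⟨B, hBsub, hBsum⟩ := subset_sum_pow_two w A (fun x _ => hw x) _ hdvd hle
    have hA'sum : ∑ x ∈ A \ B, w x = ∑ i ∈ Finset.Icc (m+2) (m+1+d), b i * 2 ^ (M - i) := by
      have := Finset.sum_sdiff (f := w) hBsub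
      omega
    obtain ⟨As', hdisj', hout', hbiU', hsum'⟩ := ih (m+1) (A \ B) (by omega) (by
      rw [show m + 1 + 1 = m + 2 by omega]; exact hA'sum)
    rw [show m + 1 + 1 = m + 2 by omega] at hout' hbiU' hsum'
    have hsubA' : ∀ j, j ≠ m + 1 → As' j ⊆ A \ B := by
      intro j hj
      by_cases hjm : j ∈ Finset.Icc (m+2) (m+1+d)
      · rw [← hbiU']; exact Finset.subset_biUnion_of_mem As' hjm
      · rw [hout' j hjm]; exact Finset.empty_subset _
    have hdisjB : ∀ j, j ≠ m + 1 → Disjoint B (As' j) := by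
      intro j hj
      exact Finset.disjoint_of_subset_right (hsubA' j hj) Finset.sdiff_disjoint.symm
    refine ⟨fun i => if i = m + 1 then B else As' i, ?_, ?_, ?_, ?_⟩
    · intro i j hij
      dsimp only
      by_cases hi : i = m + 1
      · subst hi
        rw [if_pos rfl, if_neg (fun h => hij h.symm)]
        exact hdisjB j (fun h => hij h.symm)
      · rw [if_neg hi]
        by_cases hj : j = m + 1
        · subst hj
          rw [if_pos rfl]
          exact (hdisjB i hi).symm
        · rw [if_neg hj]
          exact hdisj' i j hij
    · intro j hjm
      rw [Icc_insert_left m (m+1+d) h1] at hjm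
      simp only [Finset.mem_insert] at hjm
      push_neg at hjm
      dsimp only
      rw [if_neg hjm.1]
      exact hout' j hjm.2
    · rw [Icc_insert_left m (m+1+d) h1, Finset.biUnion_insert]
      simp only [↓reduceIte]
      have : (Finset.Icc (m+2) (m+1+d)).biUnion (fun i => if i = m + 1 then B else As' i)
          = (Finset.Icc (m+2) (m+1+d)).biUnion As' := by
        apply Finset.biUnion_congr rfl
        intro i hi
        rw [if_neg (by simp [Finset.mem_Icc] at hi; omega)]
      rw [this, hbiU', Finset.union_sdiff_of_subset hBsub]
    · intro i hi
      rw [Icc_insert_left m (m+1+d) h1] at hi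
      rcases Finset.mem_insert.mp hi with rfl | hi
      · simp only [↓reduceIte]; exact hBsum
      · simp only [if_neg (show ¬ i = m + 1 by simp [Finset.mem_Icc] at hi; omega)]
        exact hsum' i hi

lemma half_pow_mul (M a : ℕ) (ha : a ≤ M) :
    ((1:ℝ)/2) ^ a * 2 ^ M = (2:ℝ) ^ (M - a) := by
  have h : (2:ℝ) ^ (M - a) * 2 ^ a = 2 ^ M := by
    rw [← pow_add]; congr 1; omega
  rw [div_pow, one_pow, div_mul_eq_mul_div, one_mul, div_eq_iff (by positivity)]
  exact h.symm

/-- Huffman-Kraft partition lemma: for a complete, strongly monotone prefix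
code with lengths l and a nonempty proper subset A whose Kraft sum has binary
expansion 0.b₁b₂…b_k with b_k = 1, there is a partition A₁,…,A_k of A with
K(A_i) = b_i·2^{−i}. -/
theorem huffman_kraft_partition (n : ℕ) (p : Fin n → ℝ) (l : Fin n → ℕ)
    (hpos : ∀ i, 0 < p i) (hsum : ∑ i, p i = 1)
    (hcomplete : ∑ i, ((1:ℝ)/2) ^ (l i) = 1)
    (hsm : ∀ (X Y : Finset (Fin n)) (i j : ℕ),
      (∑ x ∈ X, ((1:ℝ)/2) ^ (l x)) = ((1:ℝ)/2) ^ i →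
      (∑ x ∈ Y, ((1:ℝ)/2) ^ (l x)) = ((1:ℝ)/2) ^ j →
      i < j → ∑ x ∈ Y, p x ≤ ∑ x ∈ X, p x)
    (A : Finset (Fin n)) (hA : A.Nonempty) (hAprop : A ≠ Finset.univ)
    (k : ℕ) (b : ℕ → ℕ) (hb : ∀ i, b i ≤ 1) (hbk : b k = 1)
    (hK : ∑ x ∈ A, ((1:ℝ)/2) ^ (l x)
        = ∑ i ∈ Finset.Icc 1 k, (b i : ℝ) * ((1:ℝ)/2) ^ i) :
    ∃ As : ℕ → Finset (Fin n),
      (∀ i j, i ≠ j → Disjoint (As i) (As j)) ∧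
      ((Finset.Icc 1 k).biUnion As = A) ∧
      (∀ i ∈ Finset.Icc 1 k,
        ∑ x ∈ As i, ((1:ℝ)/2) ^ (l x) = (b i : ℝ) * ((1:ℝ)/2) ^ i) := by
  set M : ℕ := k + ∑ i, l i with hM
  have hlM : ∀ x : Fin n, l x ≤ M := fun x => le_trans
    (Finset.single_le_sum (fun _ _ => Nat.zero_le _) (Finset.mem_univ x)) (by omega)
  have hkM : k ≤ M := by omega
  set w : Fin n → ℕ := fun x => 2 ^ (M - l x) with hwdef
  have hw : ∀ x, ∃ e, w x = 2 ^ e := fun x => ⟨M - l x, rfl⟩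
  have hcastL : ∀ (T : Finset (Fin n)),
      (↑(∑ x ∈ T, w x) : ℝ) = (∑ x ∈ T, ((1:ℝ)/2) ^ (l x)) * 2 ^ M := by
    intro T
    rw [Finset.sum_mul]
    push_cast [hwdef]
    exact Finset.sum_congr rfl fun x _ => ((half_pow_mul M (l x) (hlM x))).symm
  have hcastR : (↑(∑ i ∈ Finset.Icc 1 k, b i * 2 ^ (M - i)) : ℝ)
      = (∑ i ∈ Finset.Icc 1 k, (b i : ℝ) * ((1:ℝ)/2) ^ i) * 2 ^ M := by
    rw [Finset.sum_mul]
    push_cast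
    refine Finset.sum_congr rfl fun i hi => ?_
    have hik : i ≤ M := le_trans (Finset.mem_Icc.mp hi).2 hkM
    rw [mul_assoc, half_pow_mul M i hik]
  have hKnat : ∑ x ∈ A, w x = ∑ i ∈ Finset.Icc 1 k, b i * 2 ^ (M - i) := by
    have : (↑(∑ x ∈ A, w x) : ℝ) = ↑(∑ i ∈ Finset.Icc 1 k, b i * 2 ^ (M - i)) := by
      rw [hcastL, hcastR, hK]
    exact_mod_cast this
  obtain ⟨As, hdisj, hout, hbiU, hsums⟩ :=
    partition_nat w b hb M hw k 0 A (by omega) (by simpa using hKnat)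
  refine ⟨As, hdisj, by simpa using hbiU, ?_⟩
  intro i hi
  have hik : i ≤ M := le_trans (Finset.mem_Icc.mp hi).2 hkM
  have h1 : ∑ x ∈ As i, w x = b i * 2 ^ (M - i) := hsums i (by simpa using hi)
  have h2 : (∑ x ∈ As i, ((1:ℝ)/2) ^ (l x)) * 2 ^ M
      = ((b i : ℝ) * ((1:ℝ)/2) ^ i) * 2 ^ M := by
    rw [← hcastL, h1, mul_assoc, half_pow_mul M i hik]
    push_cast
    ring
  exact mul_right_cancel₀ (by positivity) h2
end

section
/- Let a source have a strongly monotone complete prefix code (e.g., a Huffman code), and let A, B be subsets of the alphabet with Kraft sums K(A) = K(B) = 2^{−i} for some integer i ≥ 0, with |A| ≥ 2. Then P(A) ≤ 2·P(B). -/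
/-- Greedy lemma: from a finset of powers of two one can pick a subset with any
target sum that all elements divide and that is at most the total sum. -/
lemma dyadic_subset {ι : Type*} [DecidableEq ι] (w : ι → ℕ) :
    ∀ (s : Finset ι), (∀ x ∈ s, ∃ k, w x = 2 ^ k) → ∀ t, (∀ x ∈ s, w x ∣ t) →
      t ≤ ∑ x ∈ s, w x → ∃ u ⊆ s, ∑ x ∈ u, w x = t := by
  intro s
  induction s using Finset.strongInduction with
  | _ s ih =>
    intro hpow t hdvd hle
    rcases Nat.eq_zero_or_pos t with rfl | ht
    · exact ⟨∅, by simp, by simp⟩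
    have hs : s.Nonempty := by
      rcases Finset.eq_empty_or_nonempty s with rfl | h
      · simp at hle; omega
      · exact h
    obtain ⟨x, hx, hmax⟩ := s.exists_max_image w hs
    have hwx : w x ≤ t := Nat.le_of_dvd ht (hdvd x hx)
    have hsum : w x + ∑ y ∈ s.erase x, w y = ∑ y ∈ s, w y := Finset.add_sum_erase _ _ hx
    have hdvd' : ∀ y ∈ s.erase x, w y ∣ t - w x := by
      intro y hy
      have hys : y ∈ s := Finset.mem_of_mem_erase hy
      obtain ⟨a, ha⟩ := hpow y hys
      obtain ⟨b, hb⟩ := hpow x hx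
      have hab : a ≤ b := by
        have := hmax y hys
        rw [ha, hb] at this
        exact (Nat.pow_le_pow_iff_right (by norm_num)).mp this
      have : w y ∣ w x := by rw [ha, hb]; exact pow_dvd_pow 2 hab
      exact Nat.dvd_sub (hdvd y hys) this
    obtain ⟨u, hu, husum⟩ := ih (s.erase x) (Finset.erase_ssubset hx)
      (fun y hy => hpow y (Finset.mem_of_mem_erase hy)) (t - w x) hdvd' (by omega)
    refine ⟨insert x u, Finset.insert_subset hx (hu.trans (Finset.erase_subset _ _)), ?_⟩
    have hxu : x ∉ u := fun h => (Finset.mem_erase.mp (hu h)).1 rfl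
    rw [Finset.sum_insert hxu, husum]
    omega

lemma two_pow_mul_half (a b : ℕ) (h : a ≤ b) :
    (2:ℝ) ^ b * ((1:ℝ)/2) ^ a = (2:ℝ) ^ (b - a) := by
  have h2 : (2:ℝ) ^ b = 2 ^ (b - a) * 2 ^ a := by rw [← pow_add]; congr 1; omega
  rw [h2, div_pow, one_pow]
  field_simp

/-- For a strongly monotone complete prefix code, if K(A) = K(B) = 2^{−i}
and |A| ≥ 2, then P(A) ≤ 2·P(B). -/
theorem prob_le_two_mul (n : ℕ) (p : Fin n → ℝ) (l : Fin n → ℕ)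
    (hpos : ∀ i, 0 < p i) (hsum : ∑ i, p i = 1)
    (hcomplete : ∑ i, ((1:ℝ)/2) ^ (l i) = 1)
    (hsm : ∀ (X Y : Finset (Fin n)) (i j : ℕ),
      (∑ x ∈ X, ((1:ℝ)/2) ^ (l x)) = ((1:ℝ)/2) ^ i →
      (∑ x ∈ Y, ((1:ℝ)/2) ^ (l x)) = ((1:ℝ)/2) ^ j →
      i < j → ∑ x ∈ Y, p x ≤ ∑ x ∈ X, p x)
    (A B : Finset (Fin n)) (i : ℕ)
    (hKA : ∑ x ∈ A, ((1:ℝ)/2) ^ (l x) = ((1:ℝ)/2) ^ i)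
    (hKB : ∑ x ∈ B, ((1:ℝ)/2) ^ (l x) = ((1:ℝ)/2) ^ i)
    (hcard : 2 ≤ A.card) :
    ∑ x ∈ A, p x ≤ 2 * ∑ x ∈ B, p x := by
  -- every element of A has length > i
  have hlen : ∀ x ∈ A, i < l x := by
    intro x hx
    obtain ⟨y, hy, hxy⟩ := Finset.exists_mem_ne (s := A) (by omega) x
    have h2 : ((1:ℝ)/2) ^ (l x) + ((1:ℝ)/2) ^ (l y) ≤ ((1:ℝ)/2) ^ i := by
      rw [← hKA]
      have : ({x, y} : Finset (Fin n)) ⊆ A := by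
        intro z hz; simp at hz; rcases hz with rfl | rfl <;> assumption
      calc ((1:ℝ)/2) ^ (l x) + ((1:ℝ)/2) ^ (l y)
          = ∑ z ∈ ({x, y} : Finset (Fin n)), ((1:ℝ)/2) ^ (l z) := by
            rw [Finset.sum_pair (Ne.symm hxy)]
        _ ≤ ∑ z ∈ A, ((1:ℝ)/2) ^ (l z) := Finset.sum_le_sum_of_subset_of_nonneg this
            (fun _ _ _ => by positivity)
    have hlt : ((1:ℝ)/2) ^ (l x) < ((1:ℝ)/2) ^ i := by
      have : (0:ℝ) < ((1:ℝ)/2) ^ (l y) := by positivity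
      linarith
    exact (pow_lt_pow_iff_right_of_lt_one₀ (by norm_num) (by norm_num)).mp hlt
  have hAne : A.Nonempty := Finset.card_pos.mp (by omega)
  -- scale to naturals
  set L := A.sup l with hL
  have hLA : ∀ x ∈ A, l x ≤ L := fun x hx => Finset.le_sup hx
  have hiL : i + 1 ≤ L := by
    obtain ⟨x, hx⟩ := hAne
    have := hlen x hx
    have := hLA x hx
    omega
  -- natural-number weights
  set w : Fin n → ℕ := fun x => 2 ^ (L - l x) with hw
  have hcast : ∀ (u : Finset (Fin n)), u ⊆ A →
      ((∑ x ∈ u, w x : ℕ) : ℝ) = 2 ^ L * ∑ x ∈ u, ((1:ℝ)/2) ^ (l x) := by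
    intro u hu
    push_cast
    rw [Finset.mul_sum]
    refine Finset.sum_congr rfl fun x hx => ?_
    have hle := hLA x (hu hx)
    rw [hw]
    push_cast
    rw [two_pow_mul_half _ _ hle]
  have hsumA : ∑ x ∈ A, w x = 2 ^ (L - i) := by
    have h1 : ((∑ x ∈ A, w x : ℕ) : ℝ) = ((2 ^ (L - i) : ℕ) : ℝ) := by
      rw [hcast A le_rfl, hKA, two_pow_mul_half _ _ (by omega)]
      push_cast
      ring
    exact_mod_cast h1
  -- find u ⊆ A with weight sum 2^(L-i-1)
  obtain ⟨u, huA, husum⟩ := dyadic_subset w A (fun x hx => ⟨L - l x, rfl⟩)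
    (2 ^ (L - i - 1))
    (by
      intro x hx
      exact pow_dvd_pow 2 (by have := hlen x hx; have := hLA x hx; omega))
    (by rw [hsumA]; exact Nat.pow_le_pow_right (by norm_num) (by omega))
  -- translate back to real Kraft sums
  have key : ∀ (v : Finset (Fin n)), v ⊆ A → ∑ x ∈ v, w x = 2 ^ (L - i - 1) →
      ∑ x ∈ v, ((1:ℝ)/2) ^ (l x) = ((1:ℝ)/2) ^ (i + 1) := by
    intro v hv hvsum
    have h1 := hcast v hv
    rw [hvsum] at h1
    have h2 : ((2 ^ (L - i - 1) : ℕ) : ℝ) = 2 ^ L * ((1:ℝ)/2) ^ (i + 1) := by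
      have he : L - (i + 1) = L - i - 1 := by omega
      rw [two_pow_mul_half _ _ (by omega), he]
      push_cast
      ring
    rw [h2] at h1
    have := mul_left_cancel₀ (a := (2:ℝ) ^ L) (by positivity) h1
    linarith
  have hKu : ∑ x ∈ u, ((1:ℝ)/2) ^ (l x) = ((1:ℝ)/2) ^ (i + 1) := key u huA husum
  have hsdiff : ∑ x ∈ A \ u, w x = 2 ^ (L - i - 1) := by
    have := Finset.sum_sdiff (f := w) huA
    have h2 : 2 ^ (L - i - 1) + 2 ^ (L - i - 1) = 2 ^ (L - i) := by
      rw [← two_mul, ← pow_succ']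
      congr 1
      omega
    omega
  have hKc : ∑ x ∈ A \ u, ((1:ℝ)/2) ^ (l x) = ((1:ℝ)/2) ^ (i + 1) :=
    key (A \ u) (Finset.sdiff_subset) hsdiff
  have h1 := hsm B u i (i + 1) hKB hKu (by omega)
  have h2 := hsm B (A \ u) i (i + 1) hKB hKc (by omega)
  have hsplit : ∑ x ∈ A \ u, p x + ∑ x ∈ u, p x = ∑ x ∈ A, p x :=
    Finset.sum_sdiff huA
  linarith
end

section
/- Let U be a subset of a source alphabet whose Kraft sum K(U) (with respect to a complete prefix code) is an integer multiple of 2^{−i} for some i ≥ 0, and let A ⊆ U satisfy 0 < K(A) < 2^{−j} for some integer j ≥ i. Then there exists B ⊆ U − A with K(A ∪ B) = 2^{−j}. -/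
open Finset

private lemma pow_half_eq {N k : ℕ} (h : k ≤ N) :
    ((1:ℝ)/2) ^ k = (2:ℝ) ^ (N - k) / 2 ^ N := by
  rw [div_pow, one_pow, div_eq_div_iff (by positivity) (by positivity), one_mul, ← pow_add]
  congr 1
  omega

private lemma mod_sub_le {P X SA WU WA : ℕ} (hPX : P ∣ X) (hSAX : SA ≤ X)
    (hPWU : P ∣ WU) (hmod : SA % P = WA % P) (hWAWU : WA ≤ WU) :
    (X - SA) % P ≤ WU - WA := by
  have h4 : (P:ℤ) ∣ (WA:ℤ) - (SA:ℤ) := (Nat.modEq_iff_dvd (n := P)).mp hmod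
  have h1 : (P:ℤ) ∣ ((WU - WA : ℕ) : ℤ) - ((X - SA : ℕ) : ℤ) := by
    push_cast [hSAX, hWAWU]
    have h2 : (P:ℤ) ∣ (WU:ℤ) := Int.natCast_dvd_natCast.mpr hPWU
    have h3 : (P:ℤ) ∣ (X:ℤ) := Int.natCast_dvd_natCast.mpr hPX
    have := dvd_sub (dvd_sub h2 h3) h4
    convert this using 1
    · rfl
    · ring
  have hmeq : (X - SA) % P = (WU - WA) % P := (Nat.modEq_iff_dvd (n := P)).mpr h1
  exact hmeq ▸ Nat.mod_le _ _

private lemma exists_subset_sum {ι : Type*} [DecidableEq ι] (a : ι → ℕ)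
    (hpow : ∀ x, ∃ e, a x = 2 ^ e) :
    ∀ T : ℕ, ∀ V : Finset ι,
      (∀ M : ℕ, T % 2 ^ M ≤ ∑ x ∈ V.filter (fun x => a x < 2 ^ M), a x) →
      ∃ B ⊆ V, ∑ x ∈ B, a x = T := by
  intro T
  induction T using Nat.strong_induction_on with
  | _ T ih =>
  intro V hinv
  rcases Nat.eq_zero_or_pos T with hT0 | hTpos
  · exact ⟨∅, empty_subset _, by simp [hT0]⟩
  have hsz : T < 2 ^ Nat.size T := Nat.lt_size_self T
  have hszpos : 0 < Nat.size T := Nat.size_pos.mpr hTpos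
  have hsz1 : 2 ^ (Nat.size T - 1) ≤ T := Nat.lt_size.mp (by omega)
  have hfeq : V.filter (fun x => a x < 2 ^ Nat.size T) = V.filter (fun x => a x ≤ T) := by
    apply filter_congr
    intro y _
    obtain ⟨e, he⟩ := hpow y
    rw [he]
    constructor
    · intro h
      have he' : e < Nat.size T := (Nat.pow_lt_pow_iff_right one_lt_two).mp h
      calc (2:ℕ) ^ e ≤ 2 ^ (Nat.size T - 1) := Nat.pow_le_pow_right (by norm_num) (by omega)
        _ ≤ T := hsz1
    · intro h; omega
  have hTf : T ≤ ∑ x ∈ V.filter (fun x => a x ≤ T), a x := by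
    have h := hinv (Nat.size T)
    rwa [Nat.mod_eq_of_lt hsz, hfeq] at h
  have hne : (V.filter (fun x => a x ≤ T)).Nonempty := by
    rcases (V.filter (fun x => a x ≤ T)).eq_empty_or_nonempty with h | h
    · rw [h] at hTf; simp at hTf; omega
    · exact h
  obtain ⟨x, hxmem, hxmax⟩ := Finset.exists_max_image _ a hne
  have hxV : x ∈ V := (mem_filter.mp hxmem).1
  have hxT : a x ≤ T := (mem_filter.mp hxmem).2
  obtain ⟨e, he⟩ := hpow x
  have haxpos : 0 < a x := by rw [he]; positivity
  have hstar : T ≤ ∑ y ∈ V.filter (fun y => a y ≤ a x), a y := by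
    refine hTf.trans (Finset.sum_le_sum_of_subset ?_)
    intro y hy
    rw [mem_filter] at hy ⊢
    exact ⟨hy.1, hxmax y (mem_filter.mpr hy)⟩
  set T' := T - a x with hT'
  have hinv' : ∀ M : ℕ, T' % 2 ^ M ≤ ∑ y ∈ (V.erase x).filter (fun y => a y < 2 ^ M), a y := by
    intro M
    by_cases hcase : a x < 2 ^ M
    · have hxf : x ∈ V.filter (fun y => a y < 2 ^ M) := mem_filter.mpr ⟨hxV, hcase⟩
      have hsum : a x + ∑ y ∈ (V.erase x).filter (fun y => a y < 2 ^ M), a y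
          = ∑ y ∈ V.filter (fun y => a y < 2 ^ M), a y := by
        rw [Finset.filter_erase]
        exact Finset.add_sum_erase _ a hxf
      have hQ := Nat.div_add_mod T (2 ^ M)
      set r := T % 2 ^ M with hr
      set Q := 2 ^ M * (T / 2 ^ M) with hQdef
      have hPQ : (2:ℕ) ^ M ∣ Q := Dvd.intro _ rfl
      have hrlt : r < 2 ^ M := Nat.mod_lt _ (Nat.two_pow_pos M)
      have hinvM := hinv M
      by_cases hax : a x ≤ r
      · have hT'eq : T' = Q + (r - a x) := by omega
        have hmodT' : T' % 2 ^ M = r - a x := by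
          obtain ⟨c, hc⟩ := hPQ
          rw [hT'eq, hc, Nat.mul_add_mod]
          exact Nat.mod_eq_of_lt (by omega)
        omega
      · have hQP : 2 ^ M ≤ Q := Nat.le_of_dvd (by omega) hPQ
        have hT'eq : T' = (Q - 2 ^ M) + (2 ^ M + r - a x) := by omega
        have hPQ' : (2:ℕ) ^ M ∣ Q - 2 ^ M := Nat.dvd_sub hPQ dvd_rfl
        have hmodT' : T' % 2 ^ M = 2 ^ M + r - a x := by
          obtain ⟨c, hc⟩ := hPQ'
          rw [hT'eq, hc, Nat.mul_add_mod]
          exact Nat.mod_eq_of_lt (by omega)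
        have hstar' : T ≤ ∑ y ∈ V.filter (fun y => a y < 2 ^ M), a y := by
          refine hstar.trans (Finset.sum_le_sum_of_subset ?_)
          intro y hy
          rw [mem_filter] at hy ⊢
          exact ⟨hy.1, lt_of_le_of_lt hy.2 hcase⟩
        omega
    · push_neg at hcase
      have hdvd : (2:ℕ) ^ M ∣ a x := by
        rw [he] at hcase ⊢
        exact pow_dvd_pow 2 ((Nat.pow_le_pow_iff_right one_lt_two).mp hcase)
      have hfx : (V.erase x).filter (fun y => a y < 2 ^ M) = V.filter (fun y => a y < 2 ^ M) := by
        rw [Finset.filter_erase]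
        apply Finset.erase_eq_of_notMem
        simp only [mem_filter, not_and, not_lt]
        intro _
        exact hcase
      have hmodT' : T' % 2 ^ M = T % 2 ^ M := by
        obtain ⟨c, hc⟩ := hdvd
        have h1 : T' = T - 2 ^ M * c := by omega
        rw [h1, Nat.sub_mul_mod (by omega)]
      rw [hfx, hmodT']
      exact hinv M
  obtain ⟨B', hB'sub, hB'sum⟩ := ih T' (by omega) (V.erase x) hinv'
  have hxB' : x ∉ B' := fun h => (Finset.notMem_erase x V) (hB'sub h)
  refine ⟨insert x B', ?_, ?_⟩
  · intro y hy
    rcases Finset.mem_insert.mp hy with rfl | hy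
    · exact hxV
    · exact Finset.erase_subset _ _ (hB'sub hy)
  · rw [Finset.sum_insert hxB', hB'sum]; omega

/-- Kraft completion lemma: if U has Kraft sum an integer multiple of 2^{−i}
(for a complete prefix code), A ⊆ U and 0 < K(A) < 2^{−j} with j ≥ i, then A
can be completed inside U to a set of Kraft sum exactly 2^{−j}. -/
theorem kraft_completion (n : ℕ) (l : Fin n → ℕ)
    (hcomplete : ∑ i, ((1:ℝ)/2) ^ (l i) = 1)
    (U : Finset (Fin n)) (i : ℕ) (m : ℕ)
    (hU : ∑ x ∈ U, ((1:ℝ)/2) ^ (l x) = (m : ℝ) * ((1:ℝ)/2) ^ i)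
    (A : Finset (Fin n)) (hAU : A ⊆ U) (j : ℕ) (hij : i ≤ j)
    (hApos : 0 < ∑ x ∈ A, ((1:ℝ)/2) ^ (l x))
    (hAlt : ∑ x ∈ A, ((1:ℝ)/2) ^ (l x) < ((1:ℝ)/2) ^ j) :
    ∃ B ⊆ U \ A, ∑ x ∈ A ∪ B, ((1:ℝ)/2) ^ (l x) = ((1:ℝ)/2) ^ j := by
  classical
  set N : ℕ := (Finset.univ.sup l) + j + 1 with hNdef
  have hlN : ∀ x, l x ≤ N := fun x => le_trans (Finset.le_sup (mem_univ x)) (by omega)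
  have hjN : j + 1 ≤ N := by omega
  set a : Fin n → ℕ := fun x => 2 ^ (N - l x) with ha
  have hpow : ∀ x, ∃ e, a x = 2 ^ e := fun x => ⟨_, rfl⟩
  have key : ∀ S : Finset (Fin n),
      ∑ x ∈ S, ((1:ℝ)/2) ^ (l x) = ((∑ x ∈ S, a x : ℕ) : ℝ) / 2 ^ N := by
    intro S
    rw [Nat.cast_sum, Finset.sum_div]
    refine Finset.sum_congr rfl fun x _ => ?_
    rw [pow_half_eq (hlN x)]
    congr 1
    rw [ha]
    push_cast
    rfl
  set SU := ∑ x ∈ U, a x with hSU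
  set SA := ∑ x ∈ A, a x with hSA
  -- transfer hypotheses to ℕ
  have hSUnat : SU * 2 ^ i = m * 2 ^ N := by
    have h1 : (SU:ℝ) / 2 ^ N = (m:ℝ) * ((1:ℝ)/2) ^ i := by rw [← key U]; exact hU
    rw [div_pow, one_pow] at h1
    field_simp at h1
    rw [mul_comm m]
    exact_mod_cast h1
  have hSUeq : SU = m * 2 ^ (N - i) := by
    have h2 : SU * 2 ^ i = m * 2 ^ (N - i) * 2 ^ i := by
      rw [hSUnat, mul_assoc, ← pow_add]
      congr 2
      omega
    exact Nat.eq_of_mul_eq_mul_right (Nat.two_pow_pos i) h2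
  have hSApos : 0 < SA := by
    rcases Nat.eq_zero_or_pos SA with h0 | h
    · rw [key A, show (∑ x ∈ A, a x) = SA from rfl, h0] at hApos
      simp at hApos
    · exact h
  have hSAlt : SA < 2 ^ (N - j) := by
    have h1 : (SA:ℝ) / 2 ^ N < (2:ℝ) ^ (N - j) / 2 ^ N := by
      rw [← key A, ← pow_half_eq (show j ≤ N by omega)]
      exact hAlt
    have h2 : (SA:ℝ) < (2:ℝ) ^ (N - j) := by
      have h2N : (0:ℝ) < 2 ^ N := by positivity
      have := mul_lt_mul_of_pos_right h1 h2N
      rwa [div_mul_cancel₀ _ (ne_of_gt h2N), div_mul_cancel₀ _ (ne_of_gt h2N)] at this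
    exact_mod_cast h2
  -- the invariant
  have hinvU : ∀ M : ℕ, (2 ^ (N - j) - SA) % 2 ^ M
      ≤ ∑ x ∈ (U \ A).filter (fun x => a x < 2 ^ M), a x := by
    intro M
    set P := 2 ^ M with hP
    have hsplitU := Finset.sum_filter_add_sum_filter_not U (fun x => a x < P) a
    have hsplitA := Finset.sum_filter_add_sum_filter_not A (fun x => a x < P) a
    have hfsub : A.filter (fun x => a x < P) ⊆ U.filter (fun x => a x < P) :=
      Finset.filter_subset_filter _ hAU
    have hWAWU : (∑ x ∈ A.filter (fun x => a x < P), a x)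
        ≤ ∑ x ∈ U.filter (fun x => a x < P), a x := Finset.sum_le_sum_of_subset hfsub
    have hsd : (U \ A).filter (fun x => a x < P)
        = U.filter (fun x => a x < P) \ A.filter (fun x => a x < P) := by
      ext y
      simp only [mem_filter, mem_sdiff]
      tauto
    have hsum_sd : ∑ x ∈ (U \ A).filter (fun x => a x < P), a x
        = (∑ x ∈ U.filter (fun x => a x < P), a x)
          - ∑ x ∈ A.filter (fun x => a x < P), a x := by
      rw [hsd]
      have h := Finset.sum_sdiff (f := a) hfsub
      omega
    have hPDU : P ∣ ∑ x ∈ U.filter (fun x => ¬ a x < P), a x := by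
      apply Finset.dvd_sum
      intro y hy
      obtain ⟨e, hee⟩ := hpow y
      have hy2 : P ≤ a y := not_lt.mp (mem_filter.mp hy).2
      rw [hee] at hy2 ⊢
      exact pow_dvd_pow 2 ((Nat.pow_le_pow_iff_right one_lt_two).mp hy2)
    have hPDA : P ∣ ∑ x ∈ A.filter (fun x => ¬ a x < P), a x := by
      apply Finset.dvd_sum
      intro y hy
      obtain ⟨e, hee⟩ := hpow y
      have hy2 : P ≤ a y := not_lt.mp (mem_filter.mp hy).2
      rw [hee] at hy2 ⊢
      exact pow_dvd_pow 2 ((Nat.pow_le_pow_iff_right one_lt_two).mp hy2)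
    rw [hsum_sd]
    by_cases hM : N - j ≤ M
    · -- large M : everything in A is small
      have hPbig : 2 ^ (N - j) ≤ P := Nat.pow_le_pow_right (by norm_num) hM
      have hAfull : A.filter (fun x => a x < P) = A := by
        apply Finset.filter_true_of_mem
        intro y hy
        have h1 : a y ≤ SA := Finset.single_le_sum (f := a) (fun _ _ => Nat.zero_le _) hy
        omega
      have hdvdSU : 2 ^ (N - j) ∣ SU := by
        rw [hSUeq]
        exact Dvd.dvd.mul_left (pow_dvd_pow 2 (by omega : N - j ≤ N - i)) m
      have hdvdDU : 2 ^ (N - j) ∣ ∑ x ∈ U.filter (fun x => ¬ a x < P), a x :=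
        dvd_trans (pow_dvd_pow 2 hM) hPDU
      have hdvdWU : 2 ^ (N - j) ∣ ∑ x ∈ U.filter (fun x => a x < P), a x := by
        have h := Nat.dvd_sub hdvdSU hdvdDU
        have heq : SU - (∑ x ∈ U.filter (fun x => ¬ a x < P), a x)
            = ∑ x ∈ U.filter (fun x => a x < P), a x := by omega
        rwa [heq] at h
      have hSA_le_WU : SA ≤ ∑ x ∈ U.filter (fun x => a x < P), a x := by
        rw [hAfull] at hWAWU
        exact hWAWU
      have hge : 2 ^ (N - j) ≤ ∑ x ∈ U.filter (fun x => a x < P), a x :=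
        Nat.le_of_dvd (by omega) hdvdWU
      have hTlt : 2 ^ (N - j) - SA < P := by omega
      rw [Nat.mod_eq_of_lt hTlt, hAfull]
      omega
    · -- small M : use mod_sub_le
      push_neg at hM
      have hPX : P ∣ 2 ^ (N - j) := pow_dvd_pow 2 (by omega)
      have hPSU : P ∣ SU := by
        rw [hSUeq]
        exact Dvd.dvd.mul_left (pow_dvd_pow 2 (by omega : M ≤ N - i)) m
      have hPWU : P ∣ ∑ x ∈ U.filter (fun x => a x < P), a x := by
        have h := Nat.dvd_sub hPSU hPDU
        have heq : SU - (∑ x ∈ U.filter (fun x => ¬ a x < P), a x)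
            = ∑ x ∈ U.filter (fun x => a x < P), a x := by omega
        rwa [heq] at h
      have hmodA : SA % P = (∑ x ∈ A.filter (fun x => a x < P), a x) % P := by
        obtain ⟨c, hc⟩ := hPDA
        have hSAeq : SA = (∑ x ∈ A.filter (fun x => a x < P), a x) + P * c := by omega
        rw [hSAeq, Nat.add_mul_mod_self_left]
      exact mod_sub_le hPX (le_of_lt hSAlt) hPWU hmodA hWAWU
  obtain ⟨B, hBsub, hBsum⟩ := exists_subset_sum a hpow (2 ^ (N - j) - SA) (U \ A) hinvU
  refine ⟨B, hBsub, ?_⟩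
  have hdisj : Disjoint A B := by
    rw [Finset.disjoint_left]
    intro y hyA hyB
    exact (Finset.mem_sdiff.mp (hBsub hyB)).2 hyA
  rw [key (A ∪ B), Finset.sum_union hdisj, hBsum]
  have hsum : SA + (2 ^ (N - j) - SA) = 2 ^ (N - j) := by omega
  rw [hsum, pow_half_eq (show j ≤ N by omega)]
  congr 1
  push_cast
  rfl
end

section
/- Let a source have a strongly monotone complete prefix code and let A, B be subsets of the alphabet with Kraft sums satisfying 2K(B) ≤ 2^{−i} ≤ K(A) for some integer i. Then P(A) ≥ P(B), and equality is possible only if K(A) = 2K(B). -/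
open Finset

section helpers

lemma pow_div_pow_eq {M t : ℕ} (h : t ≤ M) :
    ((2:ℝ)^t)/2^M = ((1:ℝ)/2)^(M - t) := by
  rw [div_pow, one_pow, div_eq_div_iff (by positivity) (by positivity), ← pow_add, one_mul]
  congr 1
  omega

lemma kraft_bridge {n : ℕ} (l : Fin n → ℕ) (M : ℕ) (hM : ∀ x, l x ≤ M)
    (S : Finset (Fin n)) :
    ∑ x ∈ S, ((1:ℝ)/2)^(l x) = ((∑ x ∈ S, 2^(M - l x) : ℕ) : ℝ) / 2^M := by
  push_cast
  rw [Finset.sum_div]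
  apply Finset.sum_congr rfl
  intro x _
  rw [pow_div_pow_eq (Nat.sub_le M (l x))]
  congr 1
  have := hM x
  omega

lemma sum_lt_sum_of_ssub {n : ℕ} (p : Fin n → ℝ) (hp : ∀ x, 0 < p x)
    {B Y : Finset (Fin n)} (hBY : B ⊆ Y) (hne : B ≠ Y) :
    ∑ x ∈ B, p x < ∑ x ∈ Y, p x := by
  obtain ⟨y, hyY, hyB⟩ := Finset.exists_of_ssubset ⟨hBY, fun h => hne (Finset.Subset.antisymm hBY h)⟩
  exact Finset.sum_lt_sum_of_subset hBY hyY hyB (hp y) (fun j _ _ => (hp j).le)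

end helpers
open Finset

/-- Extraction with divisibility: from a set of weights each dividing `2^k`
with total at least `2^k`, a subset summing exactly to `2^k` can be found. -/
lemma kraft_extract_div {n : ℕ} (w : Fin n → ℕ) :
    ∀ (k : ℕ) (S : Finset (Fin n)), (∀ x ∈ S, w x ∣ 2^k) → 2^k ≤ ∑ x ∈ S, w x →
    ∃ X ⊆ S, ∑ x ∈ X, w x = 2^k := by
  intro k
  induction k with
  | zero =>
    intro S hdvd hge
    have hne : S.Nonempty := by
      by_contra h
      rw [not_nonempty_iff_eq_empty] at h
      simp [h] at hge
    obtain ⟨x, hx⟩ := hne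
    refine ⟨{x}, by simpa using hx, ?_⟩
    simpa using Nat.dvd_one.mp (by simpa using hdvd x hx)
  | succ k ih =>
    intro S hdvd hge
    by_cases hex : ∃ x ∈ S, w x = 2^(k+1)
    · obtain ⟨x, hxS, hx⟩ := hex
      exact ⟨{x}, by simpa using hxS, by simp [hx]⟩
    · push_neg at hex
      have hdvd' : ∀ x ∈ S, w x ∣ 2^k := by
        intro x hx
        obtain ⟨t, ht, hwt⟩ := (Nat.dvd_prime_pow Nat.prime_two).mp (hdvd x hx)
        have htk : t ≤ k := by
          rcases Nat.lt_or_ge t (k+1) with h | h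
          · omega
          · exfalso; exact hex x hx (by rw [hwt]; congr 1; omega)
        exact hwt ▸ pow_dvd_pow 2 htk
      have hge1 : 2^k ≤ ∑ x ∈ S, w x := le_trans (Nat.pow_le_pow_right (by norm_num) (by omega)) hge
      obtain ⟨X1, hX1S, hX1⟩ := ih S hdvd' hge1
      have hsplit : ∑ x ∈ S \ X1, w x + ∑ x ∈ X1, w x = ∑ x ∈ S, w x :=
        Finset.sum_sdiff hX1S
      have hge2 : 2^k ≤ ∑ x ∈ S \ X1, w x := by
        have : 2^(k+1) = 2^k + 2^k := by ring
        omega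
      obtain ⟨X2, hX2S, hX2⟩ := ih (S \ X1) (fun x hx => hdvd' x (sdiff_subset hx)) hge2
      have hdisj : Disjoint X1 X2 :=
        (disjoint_sdiff.mono_right hX2S)
      refine ⟨X1 ∪ X2, union_subset hX1S (hX2S.trans sdiff_subset), ?_⟩
      rw [Finset.sum_union hdisj, hX1, hX2]
      ring

/-- Extraction: from a set of power-of-two weights with total at least `2^k`,
a subset summing to an exact power `2^k'`, `k' ≥ k`, can be found. -/
lemma kraft_extract {n : ℕ} (w : Fin n → ℕ) (hw : ∀ x, ∃ t, w x = 2^t)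
    (k : ℕ) (S : Finset (Fin n)) (hge : 2^k ≤ ∑ x ∈ S, w x) :
    ∃ X ⊆ S, ∃ k', k ≤ k' ∧ ∑ x ∈ X, w x = 2^k' := by
  by_cases hex : ∃ x ∈ S, 2^k < w x
  · obtain ⟨x, hxS, hx⟩ := hex
    obtain ⟨t, ht⟩ := hw x
    have : k < t := by
      have := ht ▸ hx
      exact (Nat.pow_lt_pow_iff_right (by norm_num)).mp this
    exact ⟨{x}, by simpa using hxS, t, by omega, by simp [ht]⟩
  · push_neg at hex
    have hdvd : ∀ x ∈ S, w x ∣ 2^k := by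
      intro x hx
      obtain ⟨t, ht⟩ := hw x
      have : t ≤ k := by
        have := ht ▸ hex x hx
        exact (Nat.pow_le_pow_iff_right (by norm_num)).mp this
      exact ht ▸ pow_dvd_pow 2 this
    obtain ⟨X, hXS, hX⟩ := kraft_extract_div w k S hdvd hge
    exact ⟨X, hXS, k, le_rfl, hX⟩

/-- Completion: a nonempty set `B` with weight sum at most `2^m` can be extended
to a set with weight sum exactly `2^m`, when the total of all weights is `2^M`,
`m ≤ M`, and all weights are powers of two. -/
lemma kraft_extend {n : ℕ} (w : Fin n → ℕ) (hw : ∀ x, ∃ t, w x = 2^t) (M : ℕ)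
    (htot : ∑ x, w x = 2^M) (m : ℕ) (hm : m ≤ M) :
    ∀ (r : ℕ) (B : Finset (Fin n)), 2^m - ∑ x ∈ B, w x ≤ r → 0 < ∑ x ∈ B, w x →
      ∑ x ∈ B, w x ≤ 2^m → ∃ Y, B ⊆ Y ∧ ∑ x ∈ Y, w x = 2^m := by
  intro r
  induction r with
  | zero =>
    intro B hr h0 hle
    exact ⟨B, subset_rfl, by omega⟩
  | succ r ih =>
    intro B hr h0 hle
    by_cases heq : ∑ x ∈ B, w x = 2^m
    · exact ⟨B, subset_rfl, heq⟩
    have hlt : ∑ x ∈ B, w x < 2^m := lt_of_le_of_ne hle heq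
    have hsplit : ∑ x ∈ univ \ B, w x + ∑ x ∈ B, w x = 2^M := by
      rw [Finset.sum_sdiff (subset_univ B)]; exact htot
    have hmM : (2:ℕ)^m ≤ 2^M := Nat.pow_le_pow_right (by norm_num) hm
    have hCne : (univ \ B).Nonempty := by
      rw [← Finset.card_pos]
      by_contra h
      push_neg at h
      interval_cases h' : (univ \ B).card
      · have : (univ \ B) = ∅ := Finset.card_eq_zero.mp h'
        rw [this] at hsplit
        simp at hsplit
        omega
    obtain ⟨x, hxC, hxmin⟩ := Finset.exists_min_image (univ \ B) w hCne
    obtain ⟨t, ht⟩ := hw x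
    have hwpos : ∀ y, 0 < w y := by
      intro y
      obtain ⟨s, hs⟩ := hw y
      rw [hs]; positivity
    have hdvdC : w x ∣ ∑ y ∈ univ \ B, w y := by
      apply Finset.dvd_sum
      intro y hy
      obtain ⟨s, hs⟩ := hw y
      have : w x ≤ w y := hxmin y hy
      rw [ht, hs] at this ⊢
      exact pow_dvd_pow 2 ((Nat.pow_le_pow_iff_right (by norm_num)).mp this)
    have htM : t ≤ M := by
      have h1 : w x ≤ ∑ y ∈ univ \ B, w y :=
        Finset.single_le_sum (fun y _ => Nat.zero_le _) hxC
      have : (2:ℕ)^t ≤ 2^M := by omega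
      exact (Nat.pow_le_pow_iff_right (by norm_num)).mp this
    have hdvd2M : w x ∣ 2^M := ht ▸ pow_dvd_pow 2 htM
    have hdvds : w x ∣ ∑ y ∈ B, w y := by
      have h1 : w x ∣ 2^M - ∑ y ∈ univ \ B, w y := Nat.dvd_sub hdvd2M hdvdC
      have h2 : 2^M - ∑ y ∈ univ \ B, w y = ∑ y ∈ B, w y := by omega
      exact h2 ▸ h1
    have hkey : w x ≤ 2^m - ∑ y ∈ B, w y := by
      by_contra hgt
      push_neg at hgt
      by_cases hcase : t ≤ m
      · have hd : w x ∣ 2^m - ∑ y ∈ B, w y :=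
          Nat.dvd_sub (ht ▸ pow_dvd_pow 2 hcase) hdvds
        have := Nat.le_of_dvd (by omega) hd
        omega
      · have hd : (2:ℕ)^m ∣ w x := ht ▸ pow_dvd_pow 2 (by omega)
        have : (2:ℕ)^m ∣ ∑ y ∈ B, w y := hd.trans hdvds
        have := Nat.le_of_dvd h0 this
        omega
    have hxB : x ∉ B := (Finset.mem_sdiff.mp hxC).2
    have hins : ∑ y ∈ insert x B, w y = w x + ∑ y ∈ B, w y :=
      Finset.sum_insert hxB
    have hwx1 : 1 ≤ w x := hwpos x
    obtain ⟨Y, hY1, hY2⟩ := ih (insert x B) (by omega) (by omega) (by omega)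
    exact ⟨Y, (Finset.subset_insert x B).trans hY1, hY2⟩

/-- For a strongly monotone complete prefix code, if 2K(B) ≤ 2^{−i} ≤ K(A)
for some integer i, then P(A) ≥ P(B), with equality possible only if
K(A) = 2K(B). -/
theorem prob_ge_of_kraft (n : ℕ) (p : Fin n → ℝ) (l : Fin n → ℕ)
    (hpos : ∀ i, 0 < p i) (hsum : ∑ i, p i = 1)
    (hcomplete : ∑ i, ((1:ℝ)/2) ^ (l i) = 1)
    (hsm : ∀ (X Y : Finset (Fin n)) (a b : ℕ),
      (∑ x ∈ X, ((1:ℝ)/2) ^ (l x)) = ((1:ℝ)/2) ^ a →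
      (∑ x ∈ Y, ((1:ℝ)/2) ^ (l x)) = ((1:ℝ)/2) ^ b →
      a < b → ∑ x ∈ Y, p x ≤ ∑ x ∈ X, p x)
    (A B : Finset (Fin n)) (i : ℤ)
    (h1 : 2 * ∑ x ∈ B, ((1:ℝ)/2) ^ (l x) ≤ (2:ℝ) ^ (-i))
    (h2 : (2:ℝ) ^ (-i) ≤ ∑ x ∈ A, ((1:ℝ)/2) ^ (l x)) :
    ∑ x ∈ B, p x ≤ ∑ x ∈ A, p x ∧
      (∑ x ∈ A, p x = ∑ x ∈ B, p x →
        ∑ x ∈ A, ((1:ℝ)/2) ^ (l x) = 2 * ∑ x ∈ B, ((1:ℝ)/2) ^ (l x)) := by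
  classical
  -- A is nonempty since its Kraft sum is positive
  have hKApos : (0:ℝ) < ∑ x ∈ A, ((1:ℝ)/2) ^ (l x) :=
    lt_of_lt_of_le (zpow_pos (by norm_num) _) h2
  have hAne : A.Nonempty := by
    rcases A.eq_empty_or_nonempty with h | h
    · rw [h] at hKApos; simp at hKApos
    · exact h
  rcases B.eq_empty_or_nonempty with hB | hBne
  · subst hB
    constructor
    · simp only [Finset.sum_empty]
      exact Finset.sum_nonneg (fun x _ => (hpos x).le)
    · intro hEq
      obtain ⟨x, hx⟩ := hAne
      have : (0:ℝ) < ∑ x ∈ A, p x :=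
        Finset.sum_pos (fun y _ => hpos y) ⟨x, hx⟩
      simp only [Finset.sum_empty] at hEq
      linarith
  -- Main case: B nonempty
  set M := Finset.univ.sup l with hM
  have hMl : ∀ x, l x ≤ M := fun x => Finset.le_sup (Finset.mem_univ x)
  set w : Fin n → ℕ := fun x => 2^(M - l x) with hwdef
  have hw : ∀ x, ∃ t, w x = 2^t := fun x => ⟨M - l x, rfl⟩
  have hbridge : ∀ S : Finset (Fin n),
      ∑ x ∈ S, ((1:ℝ)/2)^(l x) = ((∑ x ∈ S, w x : ℕ) : ℝ) / 2^M :=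
    fun S => kraft_bridge l M hMl S
  have htotw : ∑ x, w x = 2^M := by
    have h := hcomplete
    rw [hbridge Finset.univ] at h
    have h2M : (0:ℝ) < 2^M := by positivity
    have : ((∑ x, w x : ℕ) : ℝ) = 2^M := by
      field_simp at h
      exact_mod_cast h
    exact_mod_cast this
  have hwpos : ∀ x, 0 < w x := fun x => pow_pos (by norm_num) _
  -- Kraft sums are nonneg and ≤ 1
  have hKnonneg : ∀ S : Finset (Fin n), (0:ℝ) ≤ ∑ x ∈ S, ((1:ℝ)/2)^(l x) :=
    fun S => Finset.sum_nonneg (fun x _ => by positivity)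
  have hKA_ub : ∑ x ∈ A, ((1:ℝ)/2)^(l x) ≤ 1 := by
    calc ∑ x ∈ A, ((1:ℝ)/2)^(l x) ≤ ∑ x, ((1:ℝ)/2)^(l x) :=
          Finset.sum_le_sum_of_subset_of_nonneg (Finset.subset_univ A)
            (fun x _ _ => by positivity)
      _ = 1 := hcomplete
  -- 0 ≤ i
  have hi0 : 0 ≤ i := by
    have h : (2:ℝ)^(-i) ≤ (2:ℝ)^(0:ℤ) := by
      simpa using le_trans h2 hKA_ub
    have := (zpow_le_zpow_iff_right₀ (by norm_num : (1:ℝ) < 2)).mp h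
    omega
  -- i + 1 ≤ M
  have hKB_lb : ((1:ℝ)/2)^M ≤ ∑ x ∈ B, ((1:ℝ)/2)^(l x) := by
    obtain ⟨x0, hx0⟩ := hBne
    have h1 : ((1:ℝ)/2)^M ≤ ((1:ℝ)/2)^(l x0) :=
      pow_le_pow_of_le_one (by norm_num) (by norm_num) (hMl x0)
    exact le_trans h1 (Finset.single_le_sum (f := fun x => ((1:ℝ)/2)^(l x))
      (fun y _ => by positivity) hx0)
  have hhalfM : ((1:ℝ)/2)^M = (2:ℝ)^(-(M:ℤ)) := by
    rw [one_div, inv_pow, ← zpow_natCast, ← zpow_neg]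
  have hiM : i + 1 ≤ (M:ℤ) := by
    have h : (2:ℝ)^((1:ℤ)-(M:ℤ)) ≤ (2:ℝ)^(-i) := by
      rw [sub_eq_add_neg, zpow_add₀ (by norm_num : (2:ℝ) ≠ 0)]
      calc (2:ℝ)^(1:ℤ) * 2^(-(M:ℤ)) = 2 * ((1:ℝ)/2)^M := by rw [hhalfM]; norm_num
      _ ≤ 2 * ∑ x ∈ B, ((1:ℝ)/2)^(l x) := by linarith [hKB_lb]
      _ ≤ (2:ℝ)^(-i) := h1
    have := (zpow_le_zpow_iff_right₀ (by norm_num : (1:ℝ) < 2)).mp h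
    omega
  set j := i.toNat with hjdef
  have hj : (j:ℤ) = i := Int.toNat_of_nonneg hi0
  have hjM : j + 1 ≤ M := by omega
  set m := M - j - 1 with hmdef
  set k := M - j with hkdef
  have hk : k = m + 1 := by omega
  have hkM : k ≤ M := by omega
  have hmM : m ≤ M := by omega
  -- rewrite 2^(-i) as (2^k)/2^M
  have hzpow : (2:ℝ)^(-i) = ((2:ℝ)^k)/2^M := by
    rw [pow_div_pow_eq hkM]
    have : M - k = j := by omega
    rw [this, one_div, inv_pow, ← zpow_natCast, ← zpow_neg, hj]
  -- translate h1 and h2 to ℕ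
  have h2M : (0:ℝ) < (2:ℝ)^M := by positivity
  have h2' : 2^k ≤ ∑ x ∈ A, w x := by
    have h := h2
    rw [hzpow, hbridge A] at h
    rw [div_le_div_iff_of_pos_right h2M] at h
    exact_mod_cast h
  have h1' : 2 * ∑ x ∈ B, w x ≤ 2^k := by
    have h := h1
    rw [hzpow, hbridge B, mul_div_assoc'] at h
    rw [div_le_div_iff_of_pos_right h2M] at h
    exact_mod_cast h
  have hpowk : (2:ℕ)^k = 2 * 2^m := by rw [hk, pow_succ]; ring
  have hsBpos : 0 < ∑ x ∈ B, w x :=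
    Finset.sum_pos (fun x _ => hwpos x) hBne
  have hsBm : ∑ x ∈ B, w x ≤ 2^m := by omega
  -- extraction and extension
  obtain ⟨X, hXA, k', hkk', hXsum⟩ := kraft_extract w hw k A h2'
  have hk'M : k' ≤ M := by
    have h : ∑ x ∈ X, w x ≤ ∑ x, w x :=
      Finset.sum_le_sum_of_subset (Finset.subset_univ X)
    rw [hXsum, htotw] at h
    exact (Nat.pow_le_pow_iff_right (by norm_num)).mp h
  obtain ⟨Y, hBY, hYsum⟩ :=
    kraft_extend w hw M htotw m hmM (2^m) B (Nat.sub_le _ _) hsBpos hsBm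
  -- strong monotonicity
  have hKX : ∑ x ∈ X, ((1:ℝ)/2)^(l x) = ((1:ℝ)/2)^(M - k') := by
    rw [hbridge X, hXsum]; push_cast; exact pow_div_pow_eq hk'M
  have hKY : ∑ x ∈ Y, ((1:ℝ)/2)^(l x) = ((1:ℝ)/2)^(M - m) := by
    rw [hbridge Y, hYsum]; push_cast; exact pow_div_pow_eq hmM
  have hab : M - k' < M - m := by omega
  have hYX : ∑ x ∈ Y, p x ≤ ∑ x ∈ X, p x := hsm X Y (M - k') (M - m) hKX hKY hab
  have hBY' : ∑ x ∈ B, p x ≤ ∑ x ∈ Y, p x :=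
    Finset.sum_le_sum_of_subset_of_nonneg hBY (fun x _ _ => (hpos x).le)
  have hXA' : ∑ x ∈ X, p x ≤ ∑ x ∈ A, p x :=
    Finset.sum_le_sum_of_subset_of_nonneg hXA (fun x _ _ => (hpos x).le)
  refine ⟨by linarith, ?_⟩
  -- equality case
  intro hEq
  have hAB : ∑ x ∈ A, w x = 2 * ∑ x ∈ B, w x := by
    by_contra hne
    rcases Nat.lt_or_ge (2 * ∑ x ∈ B, w x) (2^k) with hcaseA | hcaseB
    · -- 2 s_B < 2^k, so s_B < 2^m, so B ⊊ Y and P(B) < P(Y)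
      have hBneY : B ≠ Y := by
        intro h
        rw [h, hYsum] at hcaseA
        omega
      have : ∑ x ∈ B, p x < ∑ x ∈ Y, p x := sum_lt_sum_of_ssub p hpos hBY hBneY
      linarith
    · -- 2 s_B = 2^k and 2^k < s_A
      have hsB2k : 2 * ∑ x ∈ B, w x = 2^k := le_antisymm h1' hcaseB
      have hkA : 2^k < ∑ x ∈ A, w x := by omega
      rcases Nat.lt_or_ge (2^k') (∑ x ∈ A, w x) with hXlt | hXge
      · -- X ⊊ A, so P(X) < P(A)
        have hXneA : X ≠ A := by
          intro h
          rw [h] at hXsum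
          omega
        have : ∑ x ∈ X, p x < ∑ x ∈ A, p x := sum_lt_sum_of_ssub p hpos hXA hXneA
        linarith
      · -- K(A) itself is 2^(-a) with a ≤ i - 1; extend B strictly to 2^(k'-1)
        have hXle : (2:ℕ)^k' ≤ ∑ x ∈ A, w x := hXsum ▸
          Finset.sum_le_sum_of_subset hXA
        have hAeq : ∑ x ∈ A, w x = 2^k' := le_antisymm hXge hXle
        have hkk'' : k < k' := by
          have : (2:ℕ)^k < 2^k' := by omega
          exact (Nat.pow_lt_pow_iff_right (by norm_num)).mp this
        set m2 := k' - 1 with hm2def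
        have hm2M : m2 ≤ M := by omega
        have hmm2 : m < m2 := by omega
        have hpowm2 : (2:ℕ)^m < 2^m2 := Nat.pow_lt_pow_right (by norm_num) hmm2
        obtain ⟨Y2, hBY2, hY2sum⟩ :=
          kraft_extend w hw M htotw m2 hm2M (2^m2) B (Nat.sub_le _ _) hsBpos (by omega)
        have hBneY2 : B ≠ Y2 := by
          intro h
          rw [h, hY2sum] at hsBm
          omega
        have hPBY2 : ∑ x ∈ B, p x < ∑ x ∈ Y2, p x := sum_lt_sum_of_ssub p hpos hBY2 hBneY2
        have hKA' : ∑ x ∈ A, ((1:ℝ)/2)^(l x) = ((1:ℝ)/2)^(M - k') := by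
          rw [hbridge A, hAeq]; push_cast; exact pow_div_pow_eq hk'M
        have hKY2 : ∑ x ∈ Y2, ((1:ℝ)/2)^(l x) = ((1:ℝ)/2)^(M - m2) := by
          rw [hbridge Y2, hY2sum]; push_cast; exact pow_div_pow_eq hm2M
        have hY2A : ∑ x ∈ Y2, p x ≤ ∑ x ∈ A, p x :=
          hsm A Y2 (M - k') (M - m2) hKA' hKY2 (by omega)
        linarith
  rw [hbridge A, hbridge B, hAB]
  push_cast
  ring
end

section
/- For any source, let U and V be disjoint subsets of the alphabet with Huffman-Kraft sums satisfying K(U) < 2^{−i} ≤ K(V) for some integer i ≥ 0. Then P(U) < 2·P(V). -/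
private lemma pow_dvd_half {w e : ℕ} (h : w ∣ 2 ^ (e + 1)) (hne : w ≠ 2 ^ (e + 1)) :
    w ∣ 2 ^ e := by
  obtain ⟨a, ha, rfl⟩ := (Nat.dvd_prime_pow Nat.prime_two).mp h
  have hae : a ≤ e := by
    rcases Nat.lt_or_ge a (e + 1) with h' | h'
    · omega
    · exact absurd (by congr 1; omega) hne
  exact pow_dvd_pow 2 hae

/-- Subset-sum: from a family of powers of two each dividing `2^d`, with total
sum at least `2^d`, one can extract a subset summing exactly to `2^d`. -/
private lemma extract_pow {n : ℕ} (w : Fin n → ℕ) :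
    ∀ d : ℕ, ∀ S : Finset (Fin n), (∀ x ∈ S, w x ∣ 2 ^ d) → 2 ^ d ≤ ∑ x ∈ S, w x →
      ∃ T ⊆ S, ∑ x ∈ T, w x = 2 ^ d := by
  intro d
  induction d with
  | zero =>
    intro S hdvd hsum
    have hS : S.Nonempty := by
      rcases S.eq_empty_or_nonempty with h | h
      · subst h; simp at hsum
      · exact h
    obtain ⟨x, hx⟩ := hS
    refine ⟨{x}, Finset.singleton_subset_iff.mpr hx, ?_⟩
    simpa using Nat.dvd_one.mp (by simpa using hdvd x hx)
  | succ e ih =>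
    intro S hdvd hsum
    by_cases hex : ∃ x ∈ S, w x = 2 ^ (e + 1)
    · obtain ⟨x, hxS, hxw⟩ := hex
      exact ⟨{x}, Finset.singleton_subset_iff.mpr hxS, by simpa using hxw⟩
    · push_neg at hex
      have hdvd' : ∀ x ∈ S, w x ∣ 2 ^ e := fun x hx =>
        pow_dvd_half (hdvd x hx) (hex x hx)
      have hpow : (2:ℕ) ^ (e + 1) = 2 ^ e * 2 := by rw [pow_succ]
      have h1 : 2 ^ e ≤ ∑ x ∈ S, w x := le_trans (by omega) hsum
      obtain ⟨T1, hT1S, hT1⟩ := ih S hdvd' h1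
      have hsplit : ∑ x ∈ S \ T1, w x + ∑ x ∈ T1, w x = ∑ x ∈ S, w x :=
        Finset.sum_sdiff hT1S
      have h2 : 2 ^ e ≤ ∑ x ∈ S \ T1, w x := by omega
      obtain ⟨T2, hT2S, hT2⟩ := ih (S \ T1)
        (fun x hx => hdvd' x (Finset.mem_sdiff.mp hx).1) h2
      have hdisj : Disjoint T1 T2 :=
        Finset.disjoint_of_subset_right hT2S Finset.disjoint_sdiff
      refine ⟨T1 ∪ T2, Finset.union_subset hT1S (hT2S.trans (Finset.sdiff_subset)), ?_⟩
      rw [Finset.sum_union hdisj, hT1, hT2]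
      omega

private lemma pow_dvd_half' {w e : ℕ} (h : w ∣ 2 ^ (e + 1)) (hlt : w < 2 ^ e) :
    w ∣ 2 ^ e := by
  refine pow_dvd_half h ?_
  have : (2:ℕ) ^ e < 2 ^ (e + 1) := by rw [pow_succ]; omega
  omega


private lemma coarse_dvd {n : ℕ} (w : Fin n → ℕ) (e : ℕ) (R : Finset (Fin n))
    (hdvd : ∀ x ∈ R, w x ∣ 2 ^ (e + 1)) :
    2 ^ (e + 1) ∣ ∑ x ∈ R.filter (fun x => ¬ w x ∣ 2 ^ e), w x := by
  refine Finset.dvd_sum ?_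
  intro x hx
  obtain ⟨hxR, hxc⟩ := Finset.mem_filter.mp hx
  have hw : w x = 2 ^ (e + 1) := by
    by_contra hne
    exact hxc (pow_dvd_half (hdvd x hxR) hne)
  exact hw ▸ dvd_rfl

/-- Extract a subset of `R` summing to `2^e`, given that all elements divide
`2^(e+1)` and `∑ R + 2^e` is a multiple of `2^(e+1)`. -/
private lemma extract_fine {n : ℕ} (w : Fin n → ℕ) (e : ℕ) (R : Finset (Fin n))
    (hdvd : ∀ x ∈ R, w x ∣ 2 ^ (e + 1))
    (hcong : 2 ^ (e + 1) ∣ ∑ x ∈ R, w x + 2 ^ e) :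
    ∃ T ⊆ R, ∑ x ∈ T, w x = 2 ^ e := by
  classical
  set R2 := R.filter (fun x => w x ∣ 2 ^ e) with hR2
  have hsplit : ∑ x ∈ R2, w x + ∑ x ∈ R.filter (fun x => ¬ w x ∣ 2 ^ e), w x
      = ∑ x ∈ R, w x := Finset.sum_filter_add_sum_filter_not R _ _
  have hcoarse := coarse_dvd w e R hdvd
  have hdvdR2 : 2 ^ (e + 1) ∣ ∑ x ∈ R2, w x + 2 ^ e := by
    have h := Nat.dvd_sub hcong hcoarse
    have heq : ∑ x ∈ R, w x + 2 ^ e - ∑ x ∈ R.filter (fun x => ¬ w x ∣ 2 ^ e), w x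
        = ∑ x ∈ R2, w x + 2 ^ e := by omega
    rwa [heq] at h
  have hge : 2 ^ e ≤ ∑ x ∈ R2, w x := by
    have hposs : 0 < ∑ x ∈ R2, w x + 2 ^ e := by positivity
    have h := Nat.le_of_dvd hposs hdvdR2
    have hpow : (2:ℕ) ^ (e + 1) = 2 ^ e * 2 := by rw [pow_succ]
    omega
  obtain ⟨T, hTR2, hT⟩ := extract_pow w e R2
    (fun x hx => (Finset.mem_filter.mp hx).2) hge
  exact ⟨T, hTR2.trans (Finset.filter_subset _ _), hT⟩

/-- Completion: if `U ⊆ S`, all weights in `S` divide `2^d`, the total sum of `S`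
is a multiple of `2^d`, and `∑ U < 2^d` with `U` nonempty, then `U` can be
completed inside `S` to sum exactly `2^d`. -/
private lemma complete_pow {n : ℕ} (w : Fin n → ℕ) :
    ∀ d : ℕ, ∀ S U : Finset (Fin n), U ⊆ S → U.Nonempty →
      (∀ x ∈ S, w x ∣ 2 ^ d) → (2 ^ d ∣ ∑ x ∈ S, w x) → ∑ x ∈ U, w x < 2 ^ d →
      ∃ W ⊆ S \ U, ∑ x ∈ U, w x + ∑ x ∈ W, w x = 2 ^ d := by
  classical
  intro d
  induction d with
  | zero =>
    intro S U hUS hUne hdvd _ hUlt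
    exfalso
    obtain ⟨x, hx⟩ := hUne
    have h1 : 1 ≤ w x := Nat.pos_of_dvd_of_pos (hdvd x (hUS hx)) (by norm_num)
    have h2 : w x ≤ ∑ y ∈ U, w y := Finset.single_le_sum (fun _ _ => Nat.zero_le _) hx
    have h3 : ∑ y ∈ U, w y < 1 := by simpa using hUlt
    omega
  | succ e ih =>
    intro S U hUS hUne hdvd hdvdS hUlt
    have hwpos : ∀ x ∈ S, 0 < w x := fun x hx =>
      Nat.pos_of_dvd_of_pos (hdvd x hx) (by positivity)
    have hUpos : 0 < ∑ x ∈ U, w x := by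
      obtain ⟨x, hx⟩ := hUne
      have h1 := Finset.single_le_sum (f := w) (fun _ _ => Nat.zero_le _) hx
      have h2 := hwpos x (hUS hx)
      omega
    have hpow : (2:ℕ) ^ (e + 1) = 2 ^ e * 2 := by rw [pow_succ]
    have hUelt : ∀ x ∈ U, w x ≤ ∑ y ∈ U, w y := fun x hx =>
      Finset.single_le_sum (fun _ _ => Nat.zero_le _) hx
    have hUSsum : ∑ x ∈ S \ U, w x + ∑ x ∈ U, w x = ∑ x ∈ S, w x :=
      Finset.sum_sdiff hUS
    rcases Nat.lt_or_ge (∑ x ∈ U, w x) (2 ^ e) with hcase | hcase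
    · -- ∑ U < 2^e : recurse on fine part, then extract another 2^e
      set S2 := S.filter (fun x => w x ∣ 2 ^ e) with hS2
      have hUS2 : U ⊆ S2 := by
        intro x hx
        refine Finset.mem_filter.mpr ⟨hUS hx, ?_⟩
        exact pow_dvd_half' (hdvd x (hUS hx)) (lt_of_le_of_lt (hUelt x hx) hcase)
      have hdvdS2 : ∀ x ∈ S2, w x ∣ 2 ^ e := fun x hx => (Finset.mem_filter.mp hx).2
      have hdvdsumS2 : 2 ^ e ∣ ∑ x ∈ S2, w x := by
        have hsplit : ∑ x ∈ S2, w x + ∑ x ∈ S.filter (fun x => ¬ w x ∣ 2 ^ e), w x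
            = ∑ x ∈ S, w x := Finset.sum_filter_add_sum_filter_not S _ _
        have hcoarse := coarse_dvd w e S hdvd
        have h1 : 2 ^ e ∣ ∑ x ∈ S, w x := dvd_trans (pow_dvd_pow 2 e.le_succ) hdvdS
        have h2 : 2 ^ e ∣ ∑ x ∈ S.filter (fun x => ¬ w x ∣ 2 ^ e), w x :=
          dvd_trans (pow_dvd_pow 2 e.le_succ) hcoarse
        have h := Nat.dvd_sub h1 h2
        have heq : ∑ x ∈ S, w x - ∑ x ∈ S.filter (fun x => ¬ w x ∣ 2 ^ e), w x
            = ∑ x ∈ S2, w x := by omega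
        rwa [heq] at h
      obtain ⟨W1, hW1, hW1sum⟩ := ih S2 U hUS2 hUne hdvdS2 hdvdsumS2 hcase
      have hW1S : W1 ⊆ S \ U := by
        refine hW1.trans ?_
        intro x hx
        obtain ⟨hx1, hx2⟩ := Finset.mem_sdiff.mp hx
        exact Finset.mem_sdiff.mpr ⟨(Finset.filter_subset _ _) hx1, hx2⟩
      set R := (S \ U) \ W1 with hR
      have hRdvd : ∀ x ∈ R, w x ∣ 2 ^ (e + 1) := fun x hx =>
        hdvd x (Finset.mem_sdiff.mp ((Finset.mem_sdiff.mp hx).1) |>.1)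
      have hRsum : ∑ x ∈ R, w x + ∑ x ∈ W1, w x + ∑ x ∈ U, w x = ∑ x ∈ S, w x := by
        have h1 : ∑ x ∈ R, w x + ∑ x ∈ W1, w x = ∑ x ∈ S \ U, w x :=
          Finset.sum_sdiff hW1S
        omega
      have hcong : 2 ^ (e + 1) ∣ ∑ x ∈ R, w x + 2 ^ e := by
        obtain ⟨k, hk⟩ := hdvdS
        have heq : ∑ x ∈ R, w x + 2 ^ e = 2 ^ (e + 1) * k := by omega
        exact heq ▸ Dvd.intro k rfl
      obtain ⟨W2, hW2R, hW2sum⟩ := extract_fine w e R hRdvd hcong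
      have hW2SU : W2 ⊆ S \ U := hW2R.trans Finset.sdiff_subset
      have hdisj12 : Disjoint W1 W2 :=
        Finset.disjoint_of_subset_right hW2R Finset.disjoint_sdiff
      refine ⟨W1 ∪ W2, Finset.union_subset hW1S hW2SU, ?_⟩
      rw [Finset.sum_union hdisj12]
      omega
    · -- ∑ U ≥ 2^e : extract U₁ ⊆ U with sum 2^e
      have hUdvd : ∀ x ∈ U, w x ∣ 2 ^ e := by
        intro x hx
        refine pow_dvd_half (hdvd x (hUS hx)) ?_
        have := hUelt x hx
        omega
      obtain ⟨U1, hU1U, hU1sum⟩ := extract_pow w e U hUdvd hcase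
      have hU2split : ∑ x ∈ U \ U1, w x + ∑ x ∈ U1, w x = ∑ x ∈ U, w x :=
        Finset.sum_sdiff hU1U
      rcases Nat.eq_zero_or_pos (∑ x ∈ U \ U1, w x) with hz | hpos2
      · -- ∑ U = 2^e exactly; extract W with sum 2^e from S \ U
        have hRdvd : ∀ x ∈ S \ U, w x ∣ 2 ^ (e + 1) := fun x hx =>
          hdvd x (Finset.mem_sdiff.mp hx).1
        have hcong : 2 ^ (e + 1) ∣ ∑ x ∈ S \ U, w x + 2 ^ e := by
          obtain ⟨k, hk⟩ := hdvdS
          have heq : ∑ x ∈ S \ U, w x + 2 ^ e = 2 ^ (e + 1) * k := by omega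
          exact heq ▸ Dvd.intro k rfl
        obtain ⟨W, hWR, hWsum⟩ := extract_fine w e (S \ U) hRdvd hcong
        exact ⟨W, hWR, by omega⟩
      · -- recurse with U₂ = U \ U1 inside S \ U1 (fine part)
        have hU2ne : (U \ U1).Nonempty := by
          rcases (U \ U1).eq_empty_or_nonempty with h | h
          · rw [h] at hpos2; simp at hpos2
          · exact h
        have hU2lt : ∑ x ∈ U \ U1, w x < 2 ^ e := by omega
        set S2 := (S \ U1).filter (fun x => w x ∣ 2 ^ e) with hS2
        have hU2S2 : U \ U1 ⊆ S2 := by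
          intro x hx
          obtain ⟨hxU, hxU1⟩ := Finset.mem_sdiff.mp hx
          refine Finset.mem_filter.mpr ⟨Finset.mem_sdiff.mpr ⟨hUS hxU, hxU1⟩, ?_⟩
          have hle : w x ≤ ∑ y ∈ U \ U1, w y :=
            Finset.single_le_sum (fun _ _ => Nat.zero_le _) hx
          exact pow_dvd_half' (hdvd x (hUS hxU)) (by omega)
        have hdvdS2 : ∀ x ∈ S2, w x ∣ 2 ^ e := fun x hx => (Finset.mem_filter.mp hx).2
        have hdvdsumS2 : 2 ^ e ∣ ∑ x ∈ S2, w x := by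
          have hsplit : ∑ x ∈ S2, w x
              + ∑ x ∈ (S \ U1).filter (fun x => ¬ w x ∣ 2 ^ e), w x
              = ∑ x ∈ S \ U1, w x := Finset.sum_filter_add_sum_filter_not (S \ U1) _ _
          have hcoarse := coarse_dvd w e (S \ U1)
            (fun x hx => hdvd x (Finset.mem_sdiff.mp hx).1)
          have hSU1 : ∑ x ∈ S \ U1, w x + ∑ x ∈ U1, w x = ∑ x ∈ S, w x :=
            Finset.sum_sdiff (hU1U.trans hUS)
          have h1 : 2 ^ e ∣ ∑ x ∈ S \ U1, w x := by
            have ha : 2 ^ e ∣ ∑ x ∈ S, w x := dvd_trans (pow_dvd_pow 2 e.le_succ) hdvdS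
            have heq : ∑ x ∈ S \ U1, w x = ∑ x ∈ S, w x - 2 ^ e := by omega
            rw [heq]; exact Nat.dvd_sub ha dvd_rfl
          have h2 : 2 ^ e ∣ ∑ x ∈ (S \ U1).filter (fun x => ¬ w x ∣ 2 ^ e), w x :=
            dvd_trans (pow_dvd_pow 2 e.le_succ) hcoarse
          have h := Nat.dvd_sub h1 h2
          have heq : ∑ x ∈ S \ U1, w x
              - ∑ x ∈ (S \ U1).filter (fun x => ¬ w x ∣ 2 ^ e), w x
              = ∑ x ∈ S2, w x := by omega
          rwa [heq] at h
        obtain ⟨W, hW, hWsum⟩ := ih S2 (U \ U1) hU2S2 hU2ne hdvdS2 hdvdsumS2 hU2lt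
        have hWSU : W ⊆ S \ U := by
          intro x hx
          have hx1 := hW hx
          obtain ⟨hxS2, hxnU2⟩ := Finset.mem_sdiff.mp hx1
          obtain ⟨hxSU1, _⟩ := Finset.mem_filter.mp hxS2
          obtain ⟨hxS, hxnU1⟩ := Finset.mem_sdiff.mp hxSU1
          refine Finset.mem_sdiff.mpr ⟨hxS, fun hxU => ?_⟩
          exact hxnU2 (Finset.mem_sdiff.mpr ⟨hxU, hxnU1⟩)
        exact ⟨W, hWSU, by omega⟩

private lemma two_pow_sub (a b : ℕ) (h : b ≤ a) :
    (2:ℝ) ^ (a - b) = 2 ^ a * ((1:ℝ)/2) ^ b := by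
  have h1 : (2:ℝ) ^ (a - b) * 2 ^ b = 2 ^ a := by
    rw [← pow_add]; congr 1; omega
  have h2 : ((1:ℝ)/2) ^ b = ((2:ℝ) ^ b)⁻¹ := by rw [one_div, inv_pow]
  rw [h2]
  field_simp
  linarith [h1]

/-- For a Huffman code (complete, strongly monotone), if U and V are disjoint
subsets of the alphabet with Huffman-Kraft sums K(U) < 2^{−i} ≤ K(V), then
P(U) < 2·P(V). -/
theorem prob_lt_two_mul (n : ℕ) (p : Fin n → ℝ) (lH : Fin n → ℕ)
    (hpos : ∀ i, 0 < p i) (hsum : ∑ i, p i = 1)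
    (hcomplete : ∑ i, ((1:ℝ)/2) ^ (lH i) = 1)
    (hsm : ∀ (X Y : Finset (Fin n)) (a b : ℕ),
      (∑ x ∈ X, ((1:ℝ)/2) ^ (lH x)) = ((1:ℝ)/2) ^ a →
      (∑ x ∈ Y, ((1:ℝ)/2) ^ (lH x)) = ((1:ℝ)/2) ^ b →
      a < b → ∑ x ∈ Y, p x ≤ ∑ x ∈ X, p x)
    (U V : Finset (Fin n)) (hdisj : Disjoint U V) (i : ℕ)
    (hU : ∑ x ∈ U, ((1:ℝ)/2) ^ (lH x) < ((1:ℝ)/2) ^ i)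
    (hV : ((1:ℝ)/2) ^ i ≤ ∑ x ∈ V, ((1:ℝ)/2) ^ (lH x)) :
    ∑ x ∈ U, p x < 2 * ∑ x ∈ V, p x := by
  classical
  -- V is nonempty
  have hVne : V.Nonempty := by
    rcases V.eq_empty_or_nonempty with h | h
    · exfalso; rw [h] at hV; simp at hV
      exact absurd hV (not_le.mpr (by positivity))
    · exact h
  have hPV_pos : 0 < ∑ x ∈ V, p x := Finset.sum_pos (fun x _ => hpos x) hVne
  rcases U.eq_empty_or_nonempty with hUe | hUne
  · rw [hUe]; simpa using by linarith
  -- main case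
  set L : ℕ := i + 1 + Finset.univ.sup lH with hL
  have hlHle : ∀ x : Fin n, lH x ≤ L := fun x => by
    have := Finset.le_sup (f := lH) (Finset.mem_univ x); omega
  set w : Fin n → ℕ := fun x => 2 ^ (L - lH x) with hw
  -- bridge: real Kraft sums vs natural weights
  have hkey : ∀ T : Finset (Fin n),
      ((∑ x ∈ T, w x : ℕ) : ℝ) = 2 ^ L * ∑ x ∈ T, ((1:ℝ)/2) ^ (lH x) := by
    intro T
    rw [Finset.mul_sum]
    push_cast
    refine Finset.sum_congr rfl fun x _ => ?_
    rw [hw]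
    push_cast
    exact two_pow_sub L (lH x) (hlHle x)
  have hcast : ∀ c : ℕ, c ≤ L → ((2 ^ (L - c) : ℕ) : ℝ) = 2 ^ L * ((1:ℝ)/2) ^ c := by
    intro c hc
    push_cast
    exact two_pow_sub L c hc
  have h2L : (0:ℝ) < 2 ^ L := by positivity
  -- converting sums back to real equalities
  have hback : ∀ (T : Finset (Fin n)) (c : ℕ), c ≤ L → ∑ x ∈ T, w x = 2 ^ (L - c) →
      ∑ x ∈ T, ((1:ℝ)/2) ^ (lH x) = ((1:ℝ)/2) ^ c := by
    intro T c hc hT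
    have h1 := hkey T
    rw [hT, hcast c hc] at h1
    exact (mul_left_cancel₀ (ne_of_gt h2L) h1.symm)
  have hiL : i + 1 ≤ L := by omega
  -- total sum of weights
  have htot : ∑ x : Fin n, w x = 2 ^ L := by
    have h1 := hkey Finset.univ
    rw [hcomplete, mul_one] at h1
    exact_mod_cast h1
  -- nat versions of hU and hV
  have hUnat : ∑ x ∈ U, w x < 2 ^ (L - i) := by
    have h1 := hkey U
    have h2 : ((∑ x ∈ U, w x : ℕ) : ℝ) < ((2 ^ (L - i) : ℕ) : ℝ) := by
      rw [h1, hcast i (by omega)]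
      exact (mul_lt_mul_iff_right₀ h2L).mpr hU
    exact_mod_cast h2
  have hVnat : 2 ^ (L - i) ≤ ∑ x ∈ V, w x := by
    have h1 := hkey V
    have h2 : ((2 ^ (L - i) : ℕ) : ℝ) ≤ ((∑ x ∈ V, w x : ℕ) : ℝ) := by
      rw [h1, hcast i (by omega)]
      exact (mul_le_mul_iff_right₀ h2L).mpr hV
    exact_mod_cast h2
  -- elements of U are fine: lH x ≥ i + 1
  have hUfine : ∀ x ∈ U, i + 1 ≤ lH x := by
    intro x hx
    have h1 : ((1:ℝ)/2) ^ (lH x) ≤ ∑ y ∈ U, ((1:ℝ)/2) ^ (lH y) :=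
      Finset.single_le_sum (f := fun y => ((1:ℝ)/2) ^ (lH y))
        (fun y _ => by positivity) hx
    have h2 : ((1:ℝ)/2) ^ (lH x) < ((1:ℝ)/2) ^ i := lt_of_le_of_lt h1 hU
    have h3 : i < lH x := by
      by_contra hc
      push_neg at hc
      have : ((1:ℝ)/2) ^ i ≤ ((1:ℝ)/2) ^ (lH x) :=
        pow_le_pow_of_le_one (by norm_num) (by norm_num) hc
      linarith
    omega
  -- choose V' ⊆ V with Kraft sum (1/2)^b, b ≤ i
  obtain ⟨V', hV'V, b, hbi, hKV'⟩ :
      ∃ V' ⊆ V, ∃ b : ℕ, b ≤ i ∧ ∑ x ∈ V', ((1:ℝ)/2) ^ (lH x) = ((1:ℝ)/2) ^ b := by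
    obtain ⟨x₀, hx₀V, hx₀min⟩ := V.exists_min_image lH hVne
    by_cases hb : lH x₀ ≤ i
    · exact ⟨{x₀}, Finset.singleton_subset_iff.mpr hx₀V, lH x₀, hb, by simp⟩
    · push_neg at hb
      have hdvdV : ∀ x ∈ V, w x ∣ 2 ^ (L - i) := by
        intro x hx
        have h1 : i ≤ lH x := le_trans (by omega) (hx₀min x hx)
        exact pow_dvd_pow 2 (by omega)
      obtain ⟨T, hTV, hTsum⟩ := extract_pow w (L - i) V hdvdV hVnat
      exact ⟨T, hTV, i, le_refl i, hback T i (by omega) hTsum⟩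
  -- completion of U inside the fine part of the alphabet
  set Sf : Finset (Fin n) := Finset.univ.filter (fun x => i + 1 ≤ lH x) with hSf
  have hUSf : U ⊆ Sf := fun x hx =>
    Finset.mem_filter.mpr ⟨Finset.mem_univ x, hUfine x hx⟩
  have hdvdSf : ∀ x ∈ Sf, w x ∣ 2 ^ (L - i) := by
    intro x hx
    have := (Finset.mem_filter.mp hx).2
    exact pow_dvd_pow 2 (by omega)
  have hdvdsumSf : 2 ^ (L - i) ∣ ∑ x ∈ Sf, w x := by
    have hsplit : ∑ x ∈ Sf, w x
        + ∑ x ∈ Finset.univ.filter (fun x => ¬ i + 1 ≤ lH x), w x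
        = ∑ x : Fin n, w x := Finset.sum_filter_add_sum_filter_not Finset.univ _ _
    have hcoarse : 2 ^ (L - i) ∣ ∑ x ∈ Finset.univ.filter (fun x => ¬ i + 1 ≤ lH x), w x := by
      refine Finset.dvd_sum ?_
      intro x hx
      have h1 : lH x ≤ i := by
        have := (Finset.mem_filter.mp hx).2; omega
      exact pow_dvd_pow 2 (by omega)
    have h1 : 2 ^ (L - i) ∣ ∑ x : Fin n, w x := htot ▸ pow_dvd_pow 2 (by omega)
    have h := Nat.dvd_sub h1 hcoarse
    have heq : ∑ x : Fin n, w x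
        - ∑ x ∈ Finset.univ.filter (fun x => ¬ i + 1 ≤ lH x), w x
        = ∑ x ∈ Sf, w x := by omega
    rwa [heq] at h
  obtain ⟨W, hWSfU, hWsum⟩ :=
    complete_pow w (L - i) Sf U hUSf hUne hdvdSf hdvdsumSf hUnat
  have hWSf : W ⊆ Sf := hWSfU.trans Finset.sdiff_subset
  have hdisjUW : Disjoint U W :=
    Finset.disjoint_of_subset_right hWSfU Finset.disjoint_sdiff
  set A : Finset (Fin n) := U ∪ W with hA
  have hAsum : ∑ x ∈ A, w x = 2 ^ (L - i) := by
    rw [hA, Finset.sum_union hdisjUW]; exact hWsum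
  have hWne : W.Nonempty := by
    rcases W.eq_empty_or_nonempty with h | h
    · exfalso; rw [h] at hWsum; simp at hWsum; omega
    · exact h
  -- split A into two halves
  have hASf : A ⊆ Sf := Finset.union_subset hUSf hWSf
  have hdvdA : ∀ x ∈ A, w x ∣ 2 ^ (L - i - 1) := by
    intro x hx
    have := (Finset.mem_filter.mp (hASf hx)).2
    exact pow_dvd_pow 2 (by omega)
  have hpowLi : (2:ℕ) ^ (L - i) = 2 ^ (L - i - 1) * 2 := by
    rw [← pow_succ]; congr 1; omega
  obtain ⟨A1, hA1A, hA1sum⟩ := extract_pow w (L - i - 1) A hdvdA (by omega)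
  have hA2split : ∑ x ∈ A \ A1, w x + ∑ x ∈ A1, w x = ∑ x ∈ A, w x :=
    Finset.sum_sdiff hA1A
  have hA2sum : ∑ x ∈ A \ A1, w x = 2 ^ (L - i - 1) := by omega
  -- real Kraft sums
  have hLi1 : L - i - 1 = L - (i + 1) := by omega
  have hKA1 : ∑ x ∈ A1, ((1:ℝ)/2) ^ (lH x) = ((1:ℝ)/2) ^ (i + 1) :=
    hback A1 (i + 1) hiL (by rw [← hLi1]; exact hA1sum)
  have hKA2 : ∑ x ∈ A \ A1, ((1:ℝ)/2) ^ (lH x) = ((1:ℝ)/2) ^ (i + 1) :=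
    hback (A \ A1) (i + 1) hiL (by rw [← hLi1]; exact hA2sum)
  -- apply strong monotonicity
  have hPA1 : ∑ x ∈ A1, p x ≤ ∑ x ∈ V', p x := hsm V' A1 b (i + 1) hKV' hKA1 (by omega)
  have hPA2 : ∑ x ∈ A \ A1, p x ≤ ∑ x ∈ V', p x := hsm V' (A \ A1) b (i + 1) hKV' hKA2 (by omega)
  -- put everything together
  have hPAsplit : ∑ x ∈ A \ A1, p x + ∑ x ∈ A1, p x = ∑ x ∈ A, p x :=
    Finset.sum_sdiff hA1A
  have hPAU : ∑ x ∈ A, p x = ∑ x ∈ U, p x + ∑ x ∈ W, p x := Finset.sum_union hdisjUW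
  have hPW : 0 < ∑ x ∈ W, p x := Finset.sum_pos (fun x _ => hpos x) hWne
  have hPV' : ∑ x ∈ V', p x ≤ ∑ x ∈ V, p x :=
    Finset.sum_le_sum_of_subset_of_nonneg hV'V (fun x _ _ => le_of_lt (hpos x))
  linarith
end
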